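/- arXiv:1808.06196 — 8 statements merged into one kernel-verified Lean document; each statement's English description precedes it below -/
import Mathlib

section
/- Let α_i ∈ ℝ/ℤ and ε_i > 0 (i ≥ 0) be sequences such that (ε_i) is decreasing and ‖α_{i+1} − q·α_i‖ ≤ ε_i for each i ≥ 0, where ‖·‖ denotes the distance to the nearest integer. Then there exists β ∈ ℝ/ℤ such that ‖q^i·β − α_i‖ ≤ ε_i for each i ≥ 0. -/
lemma coe_nsmul' (n : ℕ) (s : ℝ) : ((n • s : ℝ) : AddCircle (1:ℝ)) = n • ((s:ℝ) : AddCircle (1:ℝ)) := by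
  exact_mod_cast (QuotientAddGroup.mk' _).map_nsmul n s

lemma lift_lemma (d : AddCircle (1:ℝ)) : ∃ r : ℝ, (r : AddCircle (1:ℝ)) = d ∧ |r| = ‖d‖ := by
  obtain ⟨x, rfl⟩ := QuotientAddGroup.mk_surjective d
  refine ⟨x - round x, ?_, ?_⟩
  · have h0 : ((round x : ℝ) : AddCircle (1:ℝ)) = 0 := by
      rw [AddCircle.coe_eq_zero_iff]
      exact ⟨round x, by simp⟩
    have : ((x - round x : ℝ) : AddCircle (1:ℝ)) = ((x:ℝ) : AddCircle (1:ℝ)) - ((round x:ℝ) : AddCircle (1:ℝ)) := by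
      exact_mod_cast (QuotientAddGroup.mk' _).map_sub x (round x)
    rw [this, h0, sub_zero]
  · rw [AddCircle.norm_eq]; simp

lemma coe_norm_le (s : ℝ) : ‖((s : ℝ) : AddCircle (1:ℝ))‖ ≤ |s| := by
  simpa using QuotientAddGroup.norm_mk_le_norm (S := AddSubgroup.zmultiples (1:ℝ)) (m := s)

lemma div_lemma (q : ℕ) (hq : 2 ≤ q) (x y : AddCircle (1:ℝ)) :
    ∃ z, q • z = x ∧ ‖z - y‖ ≤ ‖x - q • y‖ / q := by
  obtain ⟨r, hr, hrn⟩ := lift_lemma (x - q • y)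
  have hq0 : (0:ℝ) < q := by positivity
  refine ⟨y + ((r / q : ℝ) : AddCircle (1:ℝ)), ?_, ?_⟩
  · rw [smul_add, ← coe_nsmul']
    have : (q : ℕ) • (r / q : ℝ) = r := by rw [nsmul_eq_mul]; field_simp
    rw [this, hr]; abel
  · rw [add_sub_cancel_left]
    calc ‖((r / q : ℝ) : AddCircle (1:ℝ))‖ ≤ |r / q| := coe_norm_le _
      _ = ‖x - q • y‖ / q := by rw [abs_div, hrn, abs_of_pos hq0]

lemma shadow_fin (q : ℕ) (hq : 2 ≤ q) : ∀ n (α : ℕ → AddCircle (1:ℝ)) (ε : ℕ → ℝ),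
    (∀ i, 0 ≤ ε i) → (∀ i, ε (i+1) ≤ ε i) → (∀ i, ‖α (i+1) - q • α i‖ ≤ ε i) →
    ∃ β, ∀ j ≤ n, ‖(q^j) • β - α j‖ ≤ ε j / (q - 1) := by
  have hq1 : (1:ℝ) < (q:ℝ) := by exact_mod_cast Nat.lt_of_lt_of_le one_lt_two hq
  have hq0 : (0:ℝ) < (q:ℝ) := lt_trans one_pos hq1
  intro n
  induction n with
  | zero =>
    intro α ε hε0 hεm hc
    refine ⟨α 0, fun j hj => ?_⟩
    interval_cases j
    simp only [pow_zero, one_smul, sub_self, norm_zero]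
    exact div_nonneg (hε0 0) (by linarith)
  | succ n ih =>
    intro α ε hε0 hεm hc
    obtain ⟨β', hβ'⟩ := ih (fun i => α (i+1)) (fun i => ε (i+1))
      (fun i => hε0 _) (fun i => hεm _) (fun i => hc (i+1))
    obtain ⟨z, hz, hzn⟩ := div_lemma q hq β' (α 0)
    refine ⟨z, fun j hj => ?_⟩
    match j with
    | 0 =>
      have h1 : ‖β' - α 1‖ ≤ ε 1 / ((q:ℝ) - 1) := by simpa using hβ' 0 (Nat.zero_le n)
      calc ‖(q^0 : ℕ) • z - α 0‖ = ‖z - α 0‖ := by rw [pow_zero, one_smul]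
        _ ≤ ‖β' - q • α 0‖ / q := hzn
        _ ≤ (‖β' - α 1‖ + ‖α 1 - q • α 0‖) / q := by
            have htri : ‖β' - q • α 0‖ ≤ ‖β' - α 1‖ + ‖α 1 - q • α 0‖ := by
              calc ‖β' - q • α 0‖ = ‖(β' - α 1) + (α 1 - q • α 0)‖ := by abel_nf
                _ ≤ _ := norm_add_le _ _
            gcongr
        _ ≤ (ε 1 / ((q:ℝ) - 1) + ε 0) / q := by
            have := hc 0
            gcongr <;> linarith
        _ ≤ (ε 0 / ((q:ℝ) - 1) + ε 0) / q := by
            have := hεm 0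
            gcongr <;> linarith
        _ = ε 0 / ((q:ℝ) - 1) := by
            have hne : (q:ℝ) - 1 ≠ 0 := by linarith
            have hne' : (q:ℝ) ≠ 0 := by linarith
            field_simp
            ring
    | (k+1) =>
      have hk : k ≤ n := Nat.succ_le_succ_iff.mp hj
      have : (q^(k+1) : ℕ) • z = (q^k : ℕ) • β' := by
        rw [pow_succ, mul_smul, hz]
      rw [this]
      exact hβ' k hk

/-- Quantitative shadowing lemma for the times-`q` map on `ℝ/ℤ`. -/
theorem stmt_0 (q : ℕ) (hq : 2 ≤ q) (α : ℕ → AddCircle (1 : ℝ)) (ε : ℕ → ℝ)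
    (hεpos : ∀ i, 0 < ε i) (hεmono : Antitone ε)
    (hclose : ∀ i, ‖α (i + 1) - q • α i‖ ≤ ε i) :
    ∃ β : AddCircle (1 : ℝ), ∀ i, ‖(q ^ i) • β - α i‖ ≤ ε i := by
  haveI : Fact ((0:ℝ) < 1) := ⟨one_pos⟩
  have hq1 : (1:ℝ) < (q:ℝ) := by exact_mod_cast Nat.lt_of_lt_of_le one_lt_two hq
  set S : ℕ → Set (AddCircle (1:ℝ)) :=
    fun n => {β | ∀ j ≤ n, ‖(q^j : ℕ) • β - α j‖ ≤ ε j} with hS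
  have hclosed : ∀ n, IsClosed (S n) := by
    intro n
    have : S n = ⋂ j ∈ Set.Iic n, {β | ‖(q^j : ℕ) • β - α j‖ ≤ ε j} := by
      ext β; simp [hS, Set.mem_iInter]
    rw [this]
    refine isClosed_biInter fun j _ => ?_
    exact isClosed_le (by fun_prop) continuous_const
  have hne : ∀ n, (S n).Nonempty := by
    intro n
    obtain ⟨β, hβ⟩ := shadow_fin q hq n α ε (fun i => (hεpos i).le)
      (fun i => hεmono (Nat.le_succ i)) hclose
    refine ⟨β, fun j hj => le_trans (hβ j hj) ?_⟩
    have hq2 : (2:ℝ) ≤ (q:ℝ) := by exact_mod_cast hq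
    exact div_le_self (hεpos j).le (by linarith)
  have hsub : ∀ n, S (n+1) ⊆ S n := fun n β hβ j hj => hβ j (le_trans hj (Nat.le_succ n))
  obtain ⟨β, hβ⟩ := IsCompact.nonempty_iInter_of_sequence_nonempty_isCompact_isClosed
    S hsub hne ((hclosed 0).isCompact) hclosed
  refine ⟨β, fun i => ?_⟩
  have := Set.mem_iInter.mp hβ i
  exact this i le_rfl
end

section
/- Let α_n ∈ ℝ/ℤ for n ∈ [N] = {0,…,N−1} and suppose that |(1/N) Σ_{n<N} e(α_n)| ≥ 1 − ε for some ε > 0, where e(t) = e^{2πit}. Then there exists β ∈ ℝ/ℤ such that for any δ > 0, the number of n ∈ [N] with ‖α_n − β‖ > δ is at most (ε/(8δ²))·N. -/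
noncomputable def fpa (x : ℝ) : ℝ := ‖(x : AddCircle (1 : ℝ))‖

open Real Finset

lemma fpa_cos_bound (x : ℝ) : 8 * fpa x ^ 2 ≤ 1 - Real.cos (2 * π * x) := by
  have ht : fpa x = |x - round x| := UnitAddCircle.norm_eq
  set y := x - round x with hy
  have hcos : Real.cos (2 * π * x) = Real.cos (2 * π * y) := by
    have := Real.cos_add_int_mul_two_pi (2 * π * y) (round x)
    rw [← this, hy]; ring_nf
  have hy2 : |y| ≤ 1/2 := abs_sub_round x
  have hsin : 2 * |y| ≤ Real.sin (π * |y|) := by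
    have h2 := Real.mul_le_sin (x := π * |y|) (by positivity) (by nlinarith [Real.pi_pos])
    calc 2 * |y| = 2/π * (π * |y|) := by field_simp
    _ ≤ _ := h2
  have hsq : Real.sin (π * |y|) ^ 2 = Real.sin (π * y) ^ 2 := by
    rcases abs_cases y with ⟨h1, _⟩ | ⟨h1, _⟩ <;> rw [h1]
    simp [mul_neg]
  have hc2 : Real.cos (2 * π * y) = 1 - 2 * Real.sin (π * y) ^ 2 := by
    have := Real.cos_two_mul (π * y)
    have := Real.sin_sq_add_cos_sq (π * y)
    have harg : 2 * π * y = 2 * (π * y) := by ring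
    rw [harg]; nlinarith
  rw [ht, hcos, hc2]
  nlinarith [hsin, abs_nonneg y]

/-- If the exponential sum of phases `α n` is nearly maximal, then almost all
phases cluster near a single point `β` of `ℝ/ℤ`. -/
theorem stmt_1 (N : ℕ) (α : ℕ → ℝ) (ε : ℝ) (hε : 0 < ε)
    (h : 1 - ε ≤ ‖
      ((∑ n ∈ Finset.range N, Complex.exp (2 * Real.pi * Complex.I * (α n))) / (N : ℂ))‖) :
    ∃ β : ℝ, ∀ δ : ℝ, 0 < δ →
      (((Finset.range N).filter (fun n => δ < fpa (α n - β))).card : ℝ) ≤ ε / (8 * δ ^ 2) * N := by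
  set S := ∑ n ∈ Finset.range N, Complex.exp (2 * Real.pi * Complex.I * (α n)) with hSdef
  have hS : (1 - ε) * N ≤ ‖S‖ := by
    rcases Nat.eq_zero_or_pos N with hN | hN
    · simp [hN]
    · rw [norm_div, Complex.norm_natCast] at h
      have : (0:ℝ) < N := by exact_mod_cast hN
      rw [le_div_iff₀ this] at h
      exact h
  set β := Complex.arg S / (2 * π) with hβ
  have hπ : (π:ℝ) ≠ 0 := Real.pi_ne_zero
  have hβ2 : 2 * π * β = Complex.arg S := by rw [hβ]; field_simp
  -- key: sum of 1 - cos ≤ ε N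
  have hterm : ∀ n, Complex.exp (2 * Real.pi * Complex.I * (α n)) * Complex.exp (-(Complex.arg S) * Complex.I)
      = Complex.exp ((2 * π * (α n - β) : ℝ) * Complex.I) := by
    intro n
    rw [← Complex.exp_add]
    congr 1
    have : ((2 * π * (α n - β) : ℝ) : ℂ) = 2 * π * (α n) - 2 * π * β := by push_cast; ring
    rw [this]
    have hc : ((Complex.arg S : ℝ) : ℂ) = 2 * (π:ℂ) * (β:ℂ) := by
      rw [← hβ2]; push_cast; ring
    rw [hc]
    ring
  have hre : ∀ n, (Complex.exp ((2 * π * (α n - β) : ℝ) * Complex.I)).re = Real.cos (2 * π * (α n - β)) := by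
    intro n; exact Complex.exp_ofReal_mul_I_re _
  have hsum : ∑ n ∈ Finset.range N, Real.cos (2 * π * (α n - β)) = ‖S‖ := by
    have h1 : S * Complex.exp (-(Complex.arg S) * Complex.I) = ‖S‖ := by
      nth_rewrite 1 [← Complex.norm_mul_exp_arg_mul_I S]
      rw [mul_assoc, ← Complex.exp_add]
      have hz : (S.arg:ℂ) * Complex.I + -(S.arg:ℂ) * Complex.I = 0 := by ring
      rw [hz, Complex.exp_zero, mul_one]
    calc ∑ n ∈ Finset.range N, Real.cos (2 * π * (α n - β))
        = ∑ n ∈ Finset.range N, (Complex.exp (2 * Real.pi * Complex.I * (α n)) * Complex.exp (-(Complex.arg S) * Complex.I)).re := by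
          refine Finset.sum_congr rfl fun n _ => ?_
          rw [hterm n, hre n]
      _ = (S * Complex.exp (-(Complex.arg S) * Complex.I)).re := by
          rw [hSdef, Finset.sum_mul, Complex.re_sum]
      _ = ‖S‖ := by rw [h1]; simp
  have hkey : ∑ n ∈ Finset.range N, (1 - Real.cos (2 * π * (α n - β))) ≤ ε * N := by
    rw [Finset.sum_sub_distrib, Finset.sum_const, Finset.card_range, hsum]
    simp only [nsmul_eq_mul, mul_one]
    have := hS
    nlinarith
  refine ⟨β, fun δ hδ => ?_⟩
  set T := (Finset.range N).filter (fun n => δ < fpa (α n - β)) with hT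
  have hcard : (T.card : ℝ) * (8 * δ ^ 2) ≤ ε * N := by
    calc (T.card : ℝ) * (8 * δ ^ 2) = ∑ _n ∈ T, 8 * δ ^ 2 := by
            rw [Finset.sum_const]; ring
      _ ≤ ∑ n ∈ T, (1 - Real.cos (2 * π * (α n - β))) := by
            refine Finset.sum_le_sum fun n hn => ?_
            have hn' := (Finset.mem_filter.mp hn).2
            have := fpa_cos_bound (α n - β)
            nlinarith [this, hn', hδ]
      _ ≤ ∑ n ∈ Finset.range N, (1 - Real.cos (2 * π * (α n - β))) := by
            refine Finset.sum_le_sum_of_subset_of_nonneg (Finset.filter_subset _ _) fun n _ _ => ?_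
            nlinarith [Real.cos_le_one (2 * π * (α n - β))]
      _ ≤ ε * N := hkey
  rw [div_mul_eq_mul_div, le_div_iff₀ (by positivity)]
  linarith [hcard]
end

section
/- Let α_n ∈ ℝ/ℤ for n ∈ [N] and suppose |(1/N) Σ_{n<N} e(α_n)| ≥ 1 − ε. Then max over n, m < N of ‖α_n − α_m‖ ≤ √(Nε). -/
lemma fpa_eq (x : ℝ) : fpa x = |x - round x| := by
  simp [fpa, AddCircle.norm_eq]

lemma fpa_nonneg (x : ℝ) : 0 ≤ fpa x := norm_nonneg _

lemma fpa_neg (x : ℝ) : fpa (-x) = fpa x := by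
  unfold fpa
  rw [AddCircle.coe_neg, norm_neg]

lemma fpa_triangle (a b c : ℝ) : fpa (a - b) ≤ fpa (a - c) + fpa (c - b) := by
  unfold fpa
  have h : ((a - b : ℝ) : AddCircle (1 : ℝ)) = ((a - c : ℝ) : AddCircle (1:ℝ)) + ((c - b : ℝ) : AddCircle (1:ℝ)) := by
    rw [show a - b = (a - c) + (c - b) by ring, AddCircle.coe_add]
  rw [h]
  exact norm_add_le _ _

lemma lemA (x : ℝ) : 8 * fpa x ^ 2 ≤ 1 - Real.cos (2 * Real.pi * x) := by
  set t : ℝ := x - round x with ht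
  have habs : |t| ≤ 1 / 2 := abs_sub_round x
  have hcos : Real.cos (2 * Real.pi * x) = Real.cos (2 * Real.pi * t) := by
    have : (2 : ℝ) * Real.pi * x = 2 * Real.pi * t + (round x : ℤ) * (2 * Real.pi) := by
      ring
    rw [this, Real.cos_add_int_mul_two_pi]
  have hsin : Real.cos (2 * Real.pi * t) = 1 - 2 * Real.sin (Real.pi * t) ^ 2 := by
    rw [show (2:ℝ) * Real.pi * t = 2 * (Real.pi * t) by ring, Real.cos_two_mul]
    nlinarith [Real.sin_sq_add_cos_sq (Real.pi * t)]
  -- |sin (π t)| ≥ 2 |t|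
  have hpi : (0:ℝ) < Real.pi := Real.pi_pos
  have hj : 2 * |t| ≤ Real.sin (Real.pi * |t|) := by
    have h1 : 0 ≤ Real.pi * |t| := by positivity
    have h2 : Real.pi * |t| ≤ Real.pi / 2 := by
      nlinarith [abs_nonneg t]
    have := Real.mul_le_sin h1 h2
    calc 2 * |t| = 2 / Real.pi * (Real.pi * |t|) := by field_simp
      _ ≤ Real.sin (Real.pi * |t|) := this
  have hsq : Real.sin (Real.pi * t) ^ 2 = Real.sin (Real.pi * |t|) ^ 2 := by
    rcases abs_cases t with ⟨h, _⟩ | ⟨h, _⟩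
    · rw [h]
    · rw [h, show Real.pi * -t = -(Real.pi * t) by ring, Real.sin_neg]
      ring
  have hge : 4 * t ^ 2 ≤ Real.sin (Real.pi * t) ^ 2 := by
    rw [hsq]
    nlinarith [abs_nonneg t, sq_abs t]
  rw [fpa_eq, ← ht, hcos, hsin, sq_abs]
  nlinarith

/-- If the exponential sum of phases `α n` is nearly maximal, then all the
phases for `n < N` lie within `√(Nε)` of each other. -/
theorem stmt_2 (N : ℕ) (α : ℕ → ℝ) (ε : ℝ) (hε : 0 < ε)
    (h : 1 - ε ≤ ‖
      ((∑ n ∈ Finset.range N, Complex.exp (2 * Real.pi * Complex.I * (α n))) / (N : ℂ))‖) :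
    ∀ n < N, ∀ m < N, fpa (α n - α m) ≤ Real.sqrt (N * ε) := by
  intro n hn m hm
  have hN : 0 < N := lt_of_le_of_lt (Nat.zero_le n) hn
  have hNR : (0:ℝ) < (N:ℝ) := by exact_mod_cast hN
  set S : ℂ := ∑ n ∈ Finset.range N, Complex.exp (2 * Real.pi * Complex.I * (α n)) with hSdef
  set φ : ℝ := Complex.arg S with hφdef
  have hpi : (0:ℝ) < Real.pi := Real.pi_pos
  set β : ℝ := φ / (2 * Real.pi) with hβdef
  have hβ : ∀ x : ℝ, 2 * Real.pi * (x - β) = 2 * Real.pi * x - φ := by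
    intro x
    rw [hβdef]
    field_simp
  -- |S| ≥ N (1 - ε)
  have habsS : (N:ℝ) * (1 - ε) ≤ ‖S‖ := by
    have h1 : ‖S / (N:ℂ)‖ = ‖S‖ / (N:ℝ) := by
      rw [norm_div]
      simp
    rw [h1] at h
    have h2 := (le_div_iff₀ hNR).mp h
    nlinarith
  -- ∑ cos = |S|
  have hkey : ((‖S‖ : ℝ) : ℂ) =
      ∑ k ∈ Finset.range N, Complex.exp (((2 * Real.pi * α k - φ : ℝ) : ℂ) * Complex.I) := by
    have h0 : ((‖S‖ : ℝ) : ℂ) = Complex.exp (-(φ:ℂ) * Complex.I) * S := by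
      conv_rhs => rw [← Complex.norm_mul_exp_arg_mul_I S]
      rw [← hφdef, show Complex.exp (-(φ:ℂ) * Complex.I) * ((‖S‖ : ℝ) * Complex.exp ((φ:ℂ) * Complex.I)) = (‖S‖ : ℝ) * (Complex.exp (-(φ:ℂ) * Complex.I) * Complex.exp ((φ:ℂ) * Complex.I)) by ring, ← Complex.exp_add]
      simp
    rw [h0, hSdef, Finset.mul_sum]
    apply Finset.sum_congr rfl
    intro k _
    rw [← Complex.exp_add]
    congr 1
    push_cast
    ring
  have hcos : ∑ k ∈ Finset.range N, Real.cos (2 * Real.pi * α k - φ) = ‖S‖ := by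
    have h6 := congrArg Complex.re hkey
    rw [Complex.ofReal_re, Complex.re_sum] at h6
    rw [h6]
    exact Finset.sum_congr rfl fun k _ => (Complex.exp_ofReal_mul_I_re _).symm
  -- each term bound
  have hterm : ∀ k ∈ Finset.range N, 1 - Real.cos (2 * Real.pi * α k - φ) ≤ (N:ℝ) * ε := by
    intro k hk
    have hsum : ∑ j ∈ Finset.range N, (1 - Real.cos (2 * Real.pi * α j - φ)) ≤ (N:ℝ) * ε := by
      rw [Finset.sum_sub_distrib, Finset.sum_const, Finset.card_range, nsmul_eq_mul, mul_one, hcos]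
      nlinarith
    have hnonneg : ∀ j ∈ Finset.range N, 0 ≤ 1 - Real.cos (2 * Real.pi * α j - φ) := by
      intro j _
      linarith [Real.cos_le_one (2 * Real.pi * α j - φ)]
    exact le_trans (Finset.single_le_sum hnonneg hk) hsum
  -- fpa bound for each phase
  have hfk : ∀ k ∈ Finset.range N, fpa (α k - β) ≤ Real.sqrt ((N:ℝ) * ε / 8) := by
    intro k hk
    have h1 := lemA (α k - β)
    rw [hβ (α k)] at h1
    have h2 := hterm k hk
    have h3 : fpa (α k - β) ^ 2 ≤ (N:ℝ) * ε / 8 := by linarith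
    exact (Real.le_sqrt (fpa_nonneg _) (by positivity)).mpr h3
  have hnm : fpa (α n - α m) ≤ 2 * Real.sqrt ((N:ℝ) * ε / 8) := by
    have ht := fpa_triangle (α n) (α m) β
    have h1 := hfk n (Finset.mem_range.mpr hn)
    have h2 := hfk m (Finset.mem_range.mpr hm)
    have h3 : fpa (β - α m) = fpa (α m - β) := by
      rw [show β - α m = -(α m - β) by ring, fpa_neg]
    linarith [ht, h3 ▸ h2]
  have hfinal : 2 * Real.sqrt ((N:ℝ) * ε / 8) ≤ Real.sqrt ((N:ℝ) * ε) := by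
    have hx : (0:ℝ) ≤ (N:ℝ) * ε := by positivity
    have h4 : (2:ℝ) = Real.sqrt 4 := by
      rw [show (4:ℝ) = 2^2 by norm_num, Real.sqrt_sq (by norm_num : (0:ℝ) ≤ 2)]
    rw [h4, ← Real.sqrt_mul (by norm_num : (0:ℝ) ≤ 4)]
    apply Real.sqrt_le_sqrt
    linarith
  linarith
end

section
/- Let q ≥ 2, r ≥ 0, G an abelian group, and suppose ℕ is partitioned into three disjoint sets I₁, I₂, I₃, each a union of intervals of length ≥ r. Then for any q-semimultiplicative sequence f : ℕ → G with gap ≤ r and any n ≥ 0, f(n) = f(n|_{I₁∪I₂})·f(n|_{I₂∪I₃})·f(n|_{I₃∪I₁})·f(n|_{I₁})^{-1}·f(n|_{I₂})^{-1}·f(n|_{I₃})^{-1}. -/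
/-- `restrictSet q n I` is `n|_I`: the integer obtained by replacing all base-`q` digits of `n`
at positions outside `I` by `0`. -/
noncomputable def restrictSet (q n : ℕ) (I : Set ℕ) : ℕ :=
  ∑ i ∈ Finset.range n, Set.indicator I (fun i => n / q ^ i % q * q ^ i) i

/-- A set `I ⊆ ℕ` is a union of intervals of length `≥ r` if every point of `I` belongs to an
interval contained in `I` of cardinality at least `r`. -/
def UnionOfLongIntervals (r : ℕ) (I : Set ℕ) : Prop :=
  ∀ x ∈ I, ∃ a b : ℕ, x ∈ Set.Icc a b ∧ Set.Icc a b ⊆ I ∧ r ≤ b + 1 - a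

lemma digit_lt {q n i : ℕ} (h : n < q ^ i) : n / q ^ i % q = 0 := by
  simp [Nat.div_eq_of_lt h]

lemma digit_dvd {q n i : ℕ} (hq : 0 < q) (h : q ^ (i + 1) ∣ n) : n / q ^ i % q = 0 := by
  obtain ⟨c, rfl⟩ := h
  rw [pow_succ, mul_assoc, Nat.mul_div_cancel_left _ (pow_pos hq i), Nat.mul_mod_right]

lemma restrict_sum {q : ℕ} (hq : 2 ≤ q) (n M : ℕ) (hM : n ≤ M) (I : Set ℕ) :
    restrictSet q n I = ∑ i ∈ Finset.range M, I.indicator (fun i => n / q ^ i % q * q ^ i) i := by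
  apply Finset.sum_subset (Finset.range_subset_range.2 hM)
  intro i _ hi
  have hni : n < q ^ i := by
    have h1 : n ≤ i := by simpa using hi
    calc n ≤ i := h1
    _ < 2 ^ i := Nat.lt_two_pow_self (n := i)
    _ ≤ q ^ i := Nat.pow_le_pow_left hq i
  by_cases h : i ∈ I
  · simp [Set.indicator_of_mem h, digit_lt hni]
  · simp [Set.indicator_of_notMem h]

lemma sum_digits_mod {q : ℕ} (n : ℕ) :
    ∀ M, ∑ i ∈ Finset.range M, n / q ^ i % q * q ^ i = n % q ^ M
  | 0 => by simp [Nat.mod_one]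
  | (M + 1) => by
    rw [Finset.sum_range_succ, sum_digits_mod n M, pow_succ, Nat.mod_mul]
    ring

lemma sum_digits_self {q : ℕ} (hq : 2 ≤ q) (n M : ℕ) (hM : n ≤ M) :
    ∑ i ∈ Finset.range M, n / q ^ i % q * q ^ i = n := by
  rw [sum_digits_mod]
  exact Nat.mod_eq_of_lt (lt_of_le_of_lt hM ((Nat.lt_two_pow_self (n := M)).trans_le (Nat.pow_le_pow_left hq M)))

lemma restrict_le {q : ℕ} (hq : 2 ≤ q) (n : ℕ) (I : Set ℕ) : restrictSet q n I ≤ n := by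
  conv_rhs => rw [← sum_digits_self hq n n le_rfl]
  apply Finset.sum_le_sum
  intro i _
  by_cases h : i ∈ I <;> simp [Set.indicator, h]

lemma restrict_eq_self {q : ℕ} (hq : 2 ≤ q) (n : ℕ) (I : Set ℕ)
    (h : ∀ i, n / q ^ i % q ≠ 0 → i ∈ I) : restrictSet q n I = n := by
  conv_rhs => rw [← sum_digits_self hq n n le_rfl]
  apply Finset.sum_congr rfl
  intro i _
  by_cases hI : i ∈ I
  · simp [Set.indicator_of_mem hI]
  · have : n / q ^ i % q = 0 := by
      by_contra hd
      exact hI (h i hd)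
    simp [Set.indicator_of_notMem hI, this]

lemma restrict_eq_zero {q : ℕ} (hq : 2 ≤ q) (n : ℕ) (I : Set ℕ)
    (h : ∀ i, n / q ^ i % q ≠ 0 → i ∉ I) : restrictSet q n I = 0 := by
  apply Finset.sum_eq_zero
  intro i _
  by_cases hI : i ∈ I
  · have : n / q ^ i % q = 0 := by
      by_contra hd
      exact h i hd hI
    simp [Set.indicator_of_mem hI, this]
  · simp [Set.indicator_of_notMem hI]

lemma digit_add {q : ℕ} (hq : 2 ≤ q) {t a b : ℕ} (ha : q ^ t ∣ a) (hb : b < q ^ t) (i : ℕ) :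
    (a + b) / q ^ i % q = if i < t then b / q ^ i % q else a / q ^ i % q := by
  have hq0 : 0 < q := by omega
  split
  case isTrue h =>
    have hia : q ^ i ∣ a := dvd_trans (pow_dvd_pow q h.le) ha
    rw [Nat.add_div_of_dvd_right hia, Nat.add_mod,
      digit_dvd hq0 (dvd_trans (pow_dvd_pow q h) ha), zero_add, Nat.mod_mod_of_dvd _ dvd_rfl]
  case isFalse h =>
    obtain ⟨c, rfl⟩ := ha
    have hqi : q ^ i = q ^ t * q ^ (i - t) := by
      rw [← pow_add]
      congr 1
      omega
    rw [hqi, ← Nat.div_div_eq_div_mul, ← Nat.div_div_eq_div_mul,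
      Nat.mul_add_div (pow_pos hq0 t), Nat.div_eq_of_lt hb, add_zero,
      Nat.mul_div_cancel_left c (pow_pos hq0 t)]

lemma restrict_add {q : ℕ} (hq : 2 ≤ q) {t a b : ℕ} (ha : q ^ t ∣ a) (hb : b < q ^ t)
    (I : Set ℕ) : restrictSet q (a + b) I = restrictSet q a I + restrictSet q b I := by
  have hq0 : 0 < q := by omega
  rw [restrict_sum hq (a + b) (a + b) le_rfl, restrict_sum hq a (a + b) (Nat.le_add_right a b),
    restrict_sum hq b (a + b) (Nat.le_add_left b a), ← Finset.sum_add_distrib]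
  apply Finset.sum_congr rfl
  intro i _
  by_cases hI : i ∈ I
  · simp only [Set.indicator_of_mem hI]
    rw [digit_add hq ha hb i]
    by_cases h : i < t
    · rw [if_pos h, digit_dvd hq0 (dvd_trans (pow_dvd_pow q h) ha)]
      ring
    · rw [if_neg h, digit_lt (lt_of_lt_of_le hb (Nat.pow_le_pow_right (by omega) (by omega)))]
      ring
  · simp [Set.indicator_of_notMem hI]
def FP {G : Type*} [CommGroup G] (q : ℕ) (f : ℕ → G) (J₁ J₂ J₃ : Set ℕ) (n : ℕ) : Prop :=
  f n * f (restrictSet q n J₁) * f (restrictSet q n J₂) * f (restrictSet q n J₃)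
    = f (restrictSet q n (J₁ ∪ J₂)) * f (restrictSet q n (J₂ ∪ J₃)) * f (restrictSet q n (J₃ ∪ J₁))

lemma FP_rot {G : Type*} [CommGroup G] {q : ℕ} {f : ℕ → G} {J₁ J₂ J₃ : Set ℕ} {n : ℕ}
    (h : FP q f J₁ J₂ J₃ n) : FP q f J₂ J₃ J₁ n := by
  unfold FP at h ⊢
  calc f n * f (restrictSet q n J₂) * f (restrictSet q n J₃) * f (restrictSet q n J₁)
      = f n * f (restrictSet q n J₁) * f (restrictSet q n J₂) * f (restrictSet q n J₃) := by
        simp [mul_comm, mul_left_comm, mul_assoc]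
    _ = f (restrictSet q n (J₁ ∪ J₂)) * f (restrictSet q n (J₂ ∪ J₃)) *
        f (restrictSet q n (J₃ ∪ J₁)) := h
    _ = f (restrictSet q n (J₂ ∪ J₃)) * f (restrictSet q n (J₃ ∪ J₁)) *
        f (restrictSet q n (J₁ ∪ J₂)) := by
        simp [mul_comm, mul_left_comm, mul_assoc]

lemma FP_swap23 {G : Type*} [CommGroup G] {q : ℕ} {f : ℕ → G} {J₁ J₂ J₃ : Set ℕ} {n : ℕ}
    (h : FP q f J₁ J₂ J₃ n) : FP q f J₁ J₃ J₂ n := by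
  unfold FP at h ⊢
  rw [Set.union_comm J₁ J₃, Set.union_comm J₃ J₂, Set.union_comm J₂ J₁]
  calc f n * f (restrictSet q n J₁) * f (restrictSet q n J₃) * f (restrictSet q n J₂)
      = f n * f (restrictSet q n J₁) * f (restrictSet q n J₂) * f (restrictSet q n J₃) := by
        simp [mul_comm, mul_left_comm, mul_assoc]
    _ = f (restrictSet q n (J₁ ∪ J₂)) * f (restrictSet q n (J₂ ∪ J₃)) *
        f (restrictSet q n (J₃ ∪ J₁)) := h
    _ = f (restrictSet q n (J₃ ∪ J₁)) * f (restrictSet q n (J₂ ∪ J₃)) *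
        f (restrictSet q n (J₁ ∪ J₂)) := by
        simp [mul_comm, mul_left_comm, mul_assoc]

lemma FP_single {G : Type*} [CommGroup G] {q : ℕ} (hq : 2 ≤ q) {f : ℕ → G} (hf0 : f 0 = 1)
    {J₁ J₂ J₃ : Set ℕ}
    (d12 : ∀ i ∈ J₁, i ∉ J₂) (d13 : ∀ i ∈ J₁, i ∉ J₃) {n : ℕ}
    (h : ∀ i, n / q ^ i % q ≠ 0 → i ∈ J₁) : FP q f J₁ J₂ J₃ n := by
  unfold FP
  rw [restrict_eq_self hq n J₁ h,
    restrict_eq_self hq n (J₁ ∪ J₂) (fun i hi => Set.mem_union_left _ (h i hi)),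
    restrict_eq_self hq n (J₃ ∪ J₁) (fun i hi => Set.mem_union_right _ (h i hi)),
    restrict_eq_zero hq n J₂ (fun i hi => d12 _ (h i hi)),
    restrict_eq_zero hq n J₃ (fun i hi => d13 _ (h i hi)),
    restrict_eq_zero hq n (J₂ ∪ J₃) (fun i hi hmem => by
      rcases hmem with h2 | h3
      · exact d12 _ (h i hi) h2
      · exact d13 _ (h i hi) h3)]
  rw [hf0]
  simp [mul_comm]
lemma step_alg {G : Type*} [CommGroup G]
    (fn fm fm' fmm' fmk1 fm'k2 fk3 fmm'k12 fm'k23 fmk31 fm'k fk1 fm'k12 fk31 : G)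
    (Fn : fn * fm' = fmm' * fm'k)
    (F1 : fmk1 = fm * fk1)
    (F31 : fmk31 = fm * fk31)
    (F12 : fmm'k12 * fm' = fmm' * fm'k12)
    (hprev : fm'k * fk1 * fm'k2 * fk3 = fm'k12 * fm'k23 * fk31) :
    fn * fmk1 * fm'k2 * fk3 = fmm'k12 * fm'k23 * fmk31 := by
  apply mul_right_cancel (b := fm')
  calc fn * fmk1 * fm'k2 * fk3 * fm'
      = (fn * fm') * fmk1 * fm'k2 * fk3 := by
        simp [mul_comm, mul_left_comm, mul_assoc]
    _ = (fmm' * fm'k) * (fm * fk1) * fm'k2 * fk3 := by rw [Fn, F1]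
    _ = (fmm' * fm) * (fm'k * fk1 * fm'k2 * fk3) := by
        simp [mul_comm, mul_left_comm, mul_assoc]
    _ = (fmm' * fm) * (fm'k12 * fm'k23 * fk31) := by rw [hprev]
    _ = (fmm' * fm'k12) * fm'k23 * (fm * fk31) := by
        simp [mul_comm, mul_left_comm, mul_assoc]
    _ = (fmm'k12 * fm') * fm'k23 * fmk31 := by rw [F12, F31]
    _ = fmm'k12 * fm'k23 * fmk31 * fm' := by
        simp [mul_comm, mul_left_comm, mul_assoc]

lemma stepB2 {G : Type*} [CommGroup G] (q r : ℕ) (hq : 2 ≤ q) (f : ℕ → G) (hf0 : f 0 = 1)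
    (hsm : ∀ l n m k : ℕ, k < q ^ l → q ^ l ∣ m → m < q ^ (l + r) → q ^ (l + r) ∣ n →
      f (n + m + k) = f (n + m) * (f m)⁻¹ * f (m + k))
    (J₁ J₂ J₃ : Set ℕ)
    (d12 : ∀ i ∈ J₁, i ∉ J₂) (d13 : ∀ i ∈ J₁, i ∉ J₃)
    (d21 : ∀ i ∈ J₂, i ∉ J₁) (d23 : ∀ i ∈ J₂, i ∉ J₃)
    (n l : ℕ) (hrl : r ≤ l)
    (hm'J : ∀ i, l - r ≤ i → i < l → i ∈ J₂)
    (hmJ : ∀ i, l ≤ i → n / q ^ i % q ≠ 0 → i ∈ J₁)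
    (hprev : FP q f J₁ J₂ J₃ (n % q ^ l)) : FP q f J₁ J₂ J₃ n := by
  have hq0 : 0 < q := by omega
  have hpos : ∀ t : ℕ, 0 < q ^ t := fun t => pow_pos hq0 t
  set m := q ^ l * (n / q ^ l) with hm_def
  set u := n % q ^ l with hu_def
  set m' := q ^ (l - r) * (u / q ^ (l - r)) with hm'_def
  set k := u % q ^ (l - r) with hk_def
  have hmu : m + u = n := Nat.div_add_mod n (q ^ l)
  have hm'k : m' + k = u := Nat.div_add_mod u (q ^ (l - r))
  have hul : u < q ^ l := Nat.mod_lt _ (hpos l)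
  have hkl : k < q ^ (l - r) := Nat.mod_lt _ (hpos _)
  have hdm : q ^ l ∣ m := dvd_mul_right _ _
  have hdm' : q ^ (l - r) ∣ m' := dvd_mul_right _ _
  have hm'u : m' ≤ u := by
    rw [← hm'k]
    exact Nat.le_add_right _ _
  have hm'lt : m' < q ^ l := lt_of_le_of_lt hm'u hul
  have hqlr : l - r + r = l := by omega
  -- digit supports
  have sm : ∀ i, m / q ^ i % q ≠ 0 → i ∈ J₁ := by
    intro i hi
    have hli : l ≤ i := by
      by_contra h
      exact hi (digit_dvd hq0 (dvd_trans (pow_dvd_pow q (by omega)) hdm))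
    apply hmJ i hli
    have : n / q ^ i % q = m / q ^ i % q := by
      conv_lhs => rw [← hmu]
      rw [digit_add hq hdm hul i, if_neg (by omega)]
    rw [this]
    exact hi
  have sm' : ∀ i, m' / q ^ i % q ≠ 0 → i ∈ J₂ := by
    intro i hi
    have h1 : l - r ≤ i := by
      by_contra h
      exact hi (digit_dvd hq0 (dvd_trans (pow_dvd_pow q (by omega)) hdm'))
    have h2 : i < l := by
      by_contra h
      exact hi (digit_lt (lt_of_lt_of_le hm'lt (Nat.pow_le_pow_right hq0 (by omega))))
    exact hm'J i h1 h2
  have rm_self : ∀ I : Set ℕ, J₁ ⊆ I → restrictSet q m I = m :=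
    fun I hI => restrict_eq_self hq _ _ (fun i hi => hI (sm i hi))
  have rm_zero : ∀ I : Set ℕ, (∀ i ∈ J₁, i ∉ I) → restrictSet q m I = 0 :=
    fun I hI => restrict_eq_zero hq _ _ (fun i hi => hI _ (sm i hi))
  have rm'_self : ∀ I : Set ℕ, J₂ ⊆ I → restrictSet q m' I = m' :=
    fun I hI => restrict_eq_self hq _ _ (fun i hi => hI (sm' i hi))
  have rm'_zero : ∀ I : Set ℕ, (∀ i ∈ J₂, i ∉ I) → restrictSet q m' I = 0 :=
    fun I hI => restrict_eq_zero hq _ _ (fun i hi => hI _ (sm' i hi))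
  have udec : ∀ I : Set ℕ, restrictSet q u I = restrictSet q m' I + restrictSet q k I := by
    intro I
    conv_lhs => rw [← hm'k]
    exact restrict_add hq hdm' hkl I
  have rdec : ∀ I : Set ℕ,
      restrictSet q n I = restrictSet q m I + restrictSet q m' I + restrictSet q k I := by
    intro I
    conv_lhs => rw [← hmu]
    rw [restrict_add hq hdm hul I, udec I, ← add_assoc]
  set k1 := restrictSet q k J₁ with hk1
  set k2 := restrictSet q k J₂ with hk2
  set k3 := restrictSet q k J₃ with hk3
  set k12 := restrictSet q k (J₁ ∪ J₂) with hk12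
  set k23 := restrictSet q k (J₂ ∪ J₃) with hk23
  set k31 := restrictSet q k (J₃ ∪ J₁) with hk31
  have e1 : restrictSet q n J₁ = m + k1 := by
    rw [rdec J₁, rm_self J₁ subset_rfl, rm'_zero J₁ d21, add_zero, ← hk1]
  have e2 : restrictSet q n J₂ = m' + k2 := by
    rw [rdec J₂, rm_zero J₂ d12, rm'_self J₂ subset_rfl, zero_add, ← hk2]
  have e3 : restrictSet q n J₃ = k3 := by
    rw [rdec J₃, rm_zero J₃ d13, rm'_zero J₃ d23, zero_add, zero_add, ← hk3]
  have e12 : restrictSet q n (J₁ ∪ J₂) = m + m' + k12 := by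
    rw [rdec _, rm_self _ Set.subset_union_left, rm'_self _ Set.subset_union_right, ← hk12]
  have e23 : restrictSet q n (J₂ ∪ J₃) = m' + k23 := by
    rw [rdec _, rm_zero _ (fun i h1 hmem => by
      rcases hmem with h2 | h3
      · exact d12 _ h1 h2
      · exact d13 _ h1 h3), rm'_self _ Set.subset_union_left, zero_add, ← hk23]
  have e31 : restrictSet q n (J₃ ∪ J₁) = m + k31 := by
    rw [rdec _, rm_self _ Set.subset_union_right, rm'_zero _ (fun i h1 hmem => by
      rcases hmem with h3 | h1'
      · exact d23 _ h1 h3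
      · exact d21 _ h1 h1'), add_zero, ← hk31]
  have eu1 : restrictSet q u J₁ = k1 := by rw [udec _, rm'_zero J₁ d21, zero_add, ← hk1]
  have eu2 : restrictSet q u J₂ = m' + k2 := by rw [udec _, rm'_self J₂ subset_rfl, ← hk2]
  have eu3 : restrictSet q u J₃ = k3 := by rw [udec _, rm'_zero J₃ d23, zero_add, ← hk3]
  have eu12 : restrictSet q u (J₁ ∪ J₂) = m' + k12 := by
    rw [udec _, rm'_self _ Set.subset_union_right, ← hk12]
  have eu23 : restrictSet q u (J₂ ∪ J₃) = m' + k23 := by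
    rw [udec _, rm'_self _ Set.subset_union_left, ← hk23]
  have eu31 : restrictSet q u (J₃ ∪ J₁) = k31 := by
    rw [udec _, rm'_zero _ (fun i h1 hmem => by
      rcases hmem with h3 | h1'
      · exact d23 _ h1 h3
      · exact d21 _ h1 h1'), zero_add, ← hk31]
  -- semimultiplicativity consequences
  have F0' : ∀ x, x ≤ k → f (m + m' + x) * f m' = f (m + m') * f (m' + x) := by
    intro x hx
    have h := hsm (l - r) m m' x (lt_of_le_of_lt hx hkl) hdm'
      (by rw [hqlr]; exact hm'lt) (by rw [hqlr]; exact hdm)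
    rw [h, mul_right_comm, inv_mul_cancel_right]
  have F2' : ∀ x, x ≤ k → f (m + x) = f m * f x := by
    intro x hx
    have h := hsm (l - r) m 0 x (lt_of_le_of_lt hx hkl) (dvd_zero _)
      (by rw [hqlr]; exact hpos l) (by rw [hqlr]; exact hdm)
    simpa [hf0] using h
  have hn' : n = m + m' + k := by omega
  have Fn : f n * f m' = f (m + m') * f (m' + k) := by
    rw [hn']
    exact F0' k le_rfl
  have F12 : f (m + m' + k12) * f m' = f (m + m') * f (m' + k12) :=
    F0' k12 (restrict_le hq k _)
  have F1 : f (m + k1) = f m * f k1 := F2' k1 (restrict_le hq k _)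
  have F31 : f (m + k31) = f m * f k31 := F2' k31 (restrict_le hq k _)
  unfold FP at hprev ⊢
  rw [eu1, eu2, eu3, eu12, eu23, eu31] at hprev
  have hu' : u = m' + k := by omega
  rw [hu'] at hprev
  rw [e1, e2, e3, e12, e23, e31]
  exact step_alg _ _ _ _ _ _ _ _ _ _ _ _ _ _ Fn F1 F31 F12 hprev
lemma onecase {G : Type*} [CommGroup G] (q r : ℕ) (hq : 2 ≤ q) (f : ℕ → G) (hf0 : f 0 = 1)
    (hsm : ∀ l n m k : ℕ, k < q ^ l → q ^ l ∣ m → m < q ^ (l + r) → q ^ (l + r) ∣ n →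
      f (n + m + k) = f (n + m) * (f m)⁻¹ * f (m + k))
    (J₁ J₂ J₃ : Set ℕ)
    (d12 : ∀ i ∈ J₁, i ∉ J₂) (d13 : ∀ i ∈ J₁, i ∉ J₃)
    (d21 : ∀ i ∈ J₂, i ∉ J₁) (d23 : ∀ i ∈ J₂, i ∉ J₃)
    (d31 : ∀ i ∈ J₃, i ∉ J₁) (d32 : ∀ i ∈ J₃, i ∉ J₂)
    (cover : ∀ i, i ∈ J₁ ∨ i ∈ J₂ ∨ i ∈ J₃)
    (long₂ : UnionOfLongIntervals r J₂) (long₃ : UnionOfLongIntervals r J₃)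
    (long₁ : UnionOfLongIntervals r J₁)
    (n : ℕ) (hn : n ≠ 0) (hp : Nat.log q n ∈ J₁)
    (IH : ∀ m, m < n → FP q f J₁ J₂ J₃ m) : FP q f J₁ J₂ J₃ n := by
  classical
  have hq1 : 1 < q := by omega
  set p := Nat.log q n with hp_def
  have hdig_hi : ∀ i, p < i → n / q ^ i % q = 0 := by
    intro i hi
    exact digit_lt (lt_of_lt_of_le (Nat.lt_pow_succ_log_self hq1 n)
      (Nat.pow_le_pow_right (by omega) (by omega)))
  have hex : ∃ l, ∀ i, l ≤ i → i ≤ p → i ∈ J₁ := by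
    refine ⟨p, fun i h1 h2 => ?_⟩
    have : i = p := le_antisymm h2 h1
    rw [this]
    exact hp
  set l₀ := Nat.find hex with hl₀_def
  have hPl₀ : ∀ i, l₀ ≤ i → i ≤ p → i ∈ J₁ := Nat.find_spec hex
  have hl₀p : l₀ ≤ p := Nat.find_min' hex (by
    intro i h1 h2
    have : i = p := le_antisymm h2 h1
    rw [this]; exact hp)
  have hl₀J : l₀ ∈ J₁ := hPl₀ l₀ le_rfl hl₀p
  obtain ⟨a, b, ⟨ha, hb⟩, hsub, hlen⟩ := long₁ l₀ hl₀J
  have hal : l₀ ≤ a := Nat.find_min' hex (by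
    intro i h1 h2
    by_cases h : l₀ ≤ i
    · exact hPl₀ i h h2
    · exact hsub ⟨h1, by omega⟩)
  have hblock : ∀ i, l₀ ≤ i → i < l₀ + r → i ∈ J₁ := by
    intro i h1 h2
    exact hsub ⟨by omega, by omega⟩
  have hmJ : ∀ i, l₀ ≤ i → n / q ^ i % q ≠ 0 → i ∈ J₁ := by
    intro i h1 h2
    by_cases hip : i ≤ p
    · exact hPl₀ i h1 hip
    · exact absurd (hdig_hi i (by omega)) h2
  by_cases hl₀0 : l₀ = 0
  · -- all nonzero digits in J₁
    apply FP_single hq hf0 d12 d13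
    intro i hi
    by_cases hip : i ≤ p
    · exact hPl₀ i (by omega) hip
    · exact absurd (hdig_hi i (by omega)) hi
  · -- l₀ > 0
    have hnotP : ¬ (∀ i, l₀ - 1 ≤ i → i ≤ p → i ∈ J₁) := Nat.find_min hex (by omega)
    push_neg at hnotP
    obtain ⟨i₀, hi1, hi2, hi3⟩ := hnotP
    have hi₀ : i₀ = l₀ - 1 := by
      by_contra h
      exact hi3 (hPl₀ i₀ (by omega) hi2)
    have hnotJ1 : l₀ - 1 ∉ J₁ := hi₀ ▸ hi3
    have hmodlt : n % q ^ l₀ < n := by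
      have h1 : q ^ l₀ ≤ q ^ p := Nat.pow_le_pow_right (by omega) hl₀p
      have h2 : q ^ p ≤ n := Nat.pow_log_le_self q hn
      exact lt_of_lt_of_le (Nat.mod_lt _ (pow_pos (by omega) l₀)) (le_trans h1 h2)
    rcases cover (l₀ - 1) with hc | hc | hc
    · exact absurd hc hnotJ1
    · -- l₀ - 1 ∈ J₂
      obtain ⟨a', b', ⟨ha', hb'⟩, hsub', hlen'⟩ := long₂ (l₀ - 1) hc
      have hb'eq : b' = l₀ - 1 := by
        by_contra h
        exact d21 l₀ (hsub' ⟨by omega, by omega⟩) hl₀J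
      have hrl : r ≤ l₀ := by omega
      have hm'J : ∀ i, l₀ - r ≤ i → i < l₀ → i ∈ J₂ := by
        intro i h1 h2
        exact hsub' ⟨by omega, by omega⟩
      exact stepB2 q r hq f hf0 hsm J₁ J₂ J₃ d12 d13 d21 d23 n l₀ hrl hm'J hmJ
        (IH _ hmodlt)
    · -- l₀ - 1 ∈ J₃
      obtain ⟨a', b', ⟨ha', hb'⟩, hsub', hlen'⟩ := long₃ (l₀ - 1) hc
      have hb'eq : b' = l₀ - 1 := by
        by_contra h
        exact d31 l₀ (hsub' ⟨by omega, by omega⟩) hl₀J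
      have hrl : r ≤ l₀ := by omega
      have hm'J : ∀ i, l₀ - r ≤ i → i < l₀ → i ∈ J₃ := by
        intro i h1 h2
        exact hsub' ⟨by omega, by omega⟩
      exact FP_swap23 (stepB2 q r hq f hf0 hsm J₁ J₃ J₂ d13 d12 d31 d32 n l₀ hrl hm'J hmJ
        (FP_swap23 (IH _ hmodlt)))
lemma main_aux {G : Type*} [CommGroup G] (q r : ℕ) (hq : 2 ≤ q) (f : ℕ → G) (hf0 : f 0 = 1)
    (hsm : ∀ l n m k : ℕ, k < q ^ l → q ^ l ∣ m → m < q ^ (l + r) → q ^ (l + r) ∣ n →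
      f (n + m + k) = f (n + m) * (f m)⁻¹ * f (m + k))
    (J₁ J₂ J₃ : Set ℕ)
    (d12 : ∀ i ∈ J₁, i ∉ J₂) (d13 : ∀ i ∈ J₁, i ∉ J₃)
    (d21 : ∀ i ∈ J₂, i ∉ J₁) (d23 : ∀ i ∈ J₂, i ∉ J₃)
    (d31 : ∀ i ∈ J₃, i ∉ J₁) (d32 : ∀ i ∈ J₃, i ∉ J₂)
    (cover : ∀ i, i ∈ J₁ ∨ i ∈ J₂ ∨ i ∈ J₃)
    (long₁ : UnionOfLongIntervals r J₁) (long₂ : UnionOfLongIntervals r J₂)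
    (long₃ : UnionOfLongIntervals r J₃) :
    ∀ n, FP q f J₁ J₂ J₃ n := by
  intro n
  induction n using Nat.strong_induction_on with
  | _ n IH =>
    by_cases hn : n = 0
    · subst hn
      apply FP_single hq hf0 d12 d13
      intro i hi
      exact absurd (by simp) hi
    · rcases cover (Nat.log q n) with hp | hp | hp
      · exact onecase q r hq f hf0 hsm J₁ J₂ J₃ d12 d13 d21 d23 d31 d32 cover long₂ long₃
          long₁ n hn hp IH
      · have h := onecase q r hq f hf0 hsm J₂ J₃ J₁ d23 d21 d32 d31 d12 d13
          (fun i => by rcases cover i with h | h | h <;> tauto) long₃ long₁ long₂ n hn hp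
          (fun m hm => FP_rot (IH m hm))
        exact FP_rot (FP_rot h)
      · have h := onecase q r hq f hf0 hsm J₃ J₁ J₂ d31 d32 d13 d12 d23 d21
          (fun i => by rcases cover i with h | h | h <;> tauto) long₁ long₂ long₃ n hn hp
          (fun m hm => FP_rot (FP_rot (IH m hm)))
        exact FP_rot h
/-- Reconstruction of a `q`-semimultiplicative sequence from local data along a partition
of `ℕ` into three sets, each a union of intervals of length `≥ r`. -/
theorem stmt_6 {G : Type*} [CommGroup G] (q r : ℕ) (hq : 2 ≤ q)
    (I₁ I₂ I₃ : Set ℕ)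
    (h12 : Disjoint I₁ I₂) (h23 : Disjoint I₂ I₃) (h31 : Disjoint I₃ I₁)
    (hcover : I₁ ∪ I₂ ∪ I₃ = Set.univ)
    (hlong₁ : UnionOfLongIntervals r I₁) (hlong₂ : UnionOfLongIntervals r I₂)
    (hlong₃ : UnionOfLongIntervals r I₃)
    (f : ℕ → G) (hf0 : f 0 = 1)
    (hsm : ∀ l n m k : ℕ, k < q ^ l → q ^ l ∣ m → m < q ^ (l + r) → q ^ (l + r) ∣ n →
      f (n + m + k) = f (n + m) * (f m)⁻¹ * f (m + k))
    (n : ℕ) :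
    f n = f (restrictSet q n (I₁ ∪ I₂)) * f (restrictSet q n (I₂ ∪ I₃)) *
        f (restrictSet q n (I₃ ∪ I₁)) *
        (f (restrictSet q n I₁))⁻¹ * (f (restrictSet q n I₂))⁻¹ * (f (restrictSet q n I₃))⁻¹ := by
  have d12 : ∀ i ∈ I₁, i ∉ I₂ := fun i h => Set.disjoint_left.mp h12 h
  have d21 : ∀ i ∈ I₂, i ∉ I₁ := fun i h => Set.disjoint_right.mp h12 h
  have d23 : ∀ i ∈ I₂, i ∉ I₃ := fun i h => Set.disjoint_left.mp h23 h
  have d32 : ∀ i ∈ I₃, i ∉ I₂ := fun i h => Set.disjoint_right.mp h23 h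
  have d31 : ∀ i ∈ I₃, i ∉ I₁ := fun i h => Set.disjoint_left.mp h31 h
  have d13 : ∀ i ∈ I₁, i ∉ I₃ := fun i h => Set.disjoint_right.mp h31 h
  have cover : ∀ i, i ∈ I₁ ∨ i ∈ I₂ ∨ i ∈ I₃ := by
    intro i
    have : i ∈ I₁ ∪ I₂ ∪ I₃ := hcover ▸ Set.mem_univ i
    rcases this with (h | h) | h <;> tauto
  have hFP := main_aux q r hq f hf0 hsm I₁ I₂ I₃ d12 d13 d21 d23 d31 d32 cover
    hlong₁ hlong₂ hlong₃ n
  unfold FP at hFP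
  rw [eq_mul_inv_iff_mul_eq, eq_mul_inv_iff_mul_eq, eq_mul_inv_iff_mul_eq]
  calc f n * f (restrictSet q n I₃) * f (restrictSet q n I₂) * f (restrictSet q n I₁)
      = f n * f (restrictSet q n I₁) * f (restrictSet q n I₂) * f (restrictSet q n I₃) := by
        simp [mul_comm, mul_left_comm, mul_assoc]
    _ = _ := hFP
end

section
/- Let q ≥ 2 and r ≥ 0. Suppose φ : ℕ → ℝ/ℤ is q-quasiadditive with gap ≤ r, i.e., φ(0) = 0 and φ(n+m) = φ(n) + φ(m) whenever m < q^l and q^{l+r} ∣ n for some l ≥ 0. Then there exists φ̃ : ℕ → ℝ, q-quasiadditive with gap ≤ r, such that φ(n) = φ̃(n) mod 1 for all n. -/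
/-- Set of nontrivial valid cut positions of `N` in base `q` with gap `r`. -/
def stmt7cuts (q r N : ℕ) : Finset ℕ :=
  (Finset.range N).filter fun l => 0 < N % q ^ l ∧ N % q ^ l < N ∧ N / q ^ l % q ^ r = 0

lemma stmt7_mem_cuts {q r N l : ℕ} (hq : 2 ≤ q) (h1 : 0 < N % q ^ l) (h2 : N % q ^ l < N)
    (h3 : N / q ^ l % q ^ r = 0) : l ∈ stmt7cuts q r N := by
  have hle : q ^ l ≤ N := by
    by_contra hlt
    push_neg at hlt
    rw [Nat.mod_eq_of_lt hlt] at h2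
    omega
  have hlq : l < q ^ l := Nat.lt_pow_self (by omega : 1 < q)
  simp only [stmt7cuts, Finset.mem_filter, Finset.mem_range]
  exact ⟨by omega, h1, h2, h3⟩

lemma stmt7_cuts_spec {q r N l : ℕ} (h : l ∈ stmt7cuts q r N) :
    0 < N % q ^ l ∧ N % q ^ l < N ∧ N / q ^ l % q ^ r = 0 := by
  simp only [stmt7cuts, Finset.mem_filter] at h
  exact h.2

/-- The lift, defined by recursion: split at the largest nontrivial valid cut. -/
noncomputable def stmt7psl (q r : ℕ) (f : ℕ → ℝ) (N : ℕ) : ℝ :=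
  if h : (stmt7cuts q r N).Nonempty then
    stmt7psl q r f (N - N % q ^ (stmt7cuts q r N).max' h) +
      stmt7psl q r f (N % q ^ (stmt7cuts q r N).max' h)
  else f N
termination_by N
decreasing_by
  · have hm := stmt7_cuts_spec ((stmt7cuts q r N).max'_mem h)
    omega
  · have hm := stmt7_cuts_spec ((stmt7cuts q r N).max'_mem h)
    omega

lemma stmt7psl_cut (q r : ℕ) (hq : 2 ≤ q) (f : ℕ → ℝ) :
    ∀ N l : ℕ, 0 < N % q ^ l → N % q ^ l < N → N / q ^ l % q ^ r = 0 →
      stmt7psl q r f N = stmt7psl q r f (N - N % q ^ l) + stmt7psl q r f (N % q ^ l) := by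
  intro N
  induction N using Nat.strong_induction_on with
  | _ N ih =>
  intro l h1 h2 h3
  have hl : l ∈ stmt7cuts q r N := stmt7_mem_cuts hq h1 h2 h3
  have hne : (stmt7cuts q r N).Nonempty := ⟨l, hl⟩
  rw [stmt7psl, dif_pos hne]
  set c := (stmt7cuts q r N).max' hne with hcdef
  obtain ⟨hc1, hc2, hc3⟩ := stmt7_cuts_spec ((stmt7cuts q r N).max'_mem hne)
  have hlc : l ≤ c := Finset.le_max' _ l hl
  have hLleq : N % q ^ c % q ^ l = N % q ^ l := Nat.mod_mod_of_dvd N (pow_dvd_pow q hlc)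
  by_cases hM : N % q ^ c = N % q ^ l
  · rw [hM]
  · -- M := N % q^c - N % q^l > 0
    have hLlle : N % q ^ l ≤ N % q ^ c := by rw [← hLleq]; exact Nat.mod_le _ _
    have hM' : N % q ^ l < N % q ^ c := lt_of_le_of_ne hLlle (Ne.symm hM)
    have hqc : 0 < q ^ c := Nat.pow_pos (by omega : 0 < q)
    have hdm : q ^ c * (N / q ^ c) + N % q ^ c = N := Nat.div_add_mod N (q ^ c)
    have hLcN : N % q ^ c < N := hc2
    -- (a) cut the low part N % q^c at l
    have ha : stmt7psl q r f (N % q ^ c) =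
        stmt7psl q r f (N % q ^ c - N % q ^ l) + stmt7psl q r f (N % q ^ l) := by
      have := ih (N % q ^ c) hLcN l (by rw [hLleq]; exact h1) (by rw [hLleq]; exact hM')
        (by
          have hsplit : q ^ c = q ^ l * q ^ (c - l) := by
            rw [← pow_add]; congr 1; omega
          have hdiv : N % q ^ c / q ^ l = N / q ^ l % q ^ (c - l) := by
            rw [hsplit, Nat.mod_mul_right_div_self]
          rw [hdiv]
          rcases le_or_gt r (c - l) with h | h
          · rw [Nat.mod_mod_of_dvd _ (pow_dvd_pow q h), h3]
          · have hz : N / q ^ l % q ^ (c - l) = 0 :=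
              Nat.mod_eq_zero_of_dvd (dvd_trans (pow_dvd_pow q h.le)
                (Nat.dvd_of_mod_eq_zero h3))
            rw [hz, Nat.zero_mod])
      rwa [hLleq] at this
    -- (b) cut the high part N - N % q^l at c
    have hMlt : N % q ^ c - N % q ^ l < q ^ c := by
      have := Nat.mod_lt N hqc
      omega
    have hHlN : N - N % q ^ l < N := by omega
    have hHleq : N - N % q ^ l = q ^ c * (N / q ^ c) + (N % q ^ c - N % q ^ l) := by omega
    have hHmod : (N - N % q ^ l) % q ^ c = N % q ^ c - N % q ^ l := by
      rw [hHleq, Nat.mul_add_mod, Nat.mod_eq_of_lt hMlt]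
    have hHdiv : (N - N % q ^ l) / q ^ c = N / q ^ c := by
      rw [hHleq, Nat.mul_add_div hqc, Nat.div_eq_of_lt hMlt, Nat.add_zero]
    have hb : stmt7psl q r f (N - N % q ^ l) =
        stmt7psl q r f (N - N % q ^ c) + stmt7psl q r f (N % q ^ c - N % q ^ l) := by
      have := ih (N - N % q ^ l) hHlN c (by rw [hHmod]; omega)
        (by rw [hHmod]; omega) (by rw [hHdiv]; exact hc3)
      rw [hHmod] at this
      rw [this]
      congr 2
      omega
    rw [ha, hb]
    ring

lemma stmt7psl_coe (q r : ℕ) (hq : 2 ≤ q) (f : ℕ → ℝ) (φ : ℕ → AddCircle (1 : ℝ))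
    (hf : ∀ n, ((f n : ℝ) : AddCircle (1 : ℝ)) = φ n)
    (hqa : ∀ l n m : ℕ, m < q ^ l → q ^ (l + r) ∣ n → φ (n + m) = φ n + φ m) :
    ∀ N, ((stmt7psl q r f N : ℝ) : AddCircle (1 : ℝ)) = φ N := by
  intro N
  induction N using Nat.strong_induction_on with
  | _ N ih =>
  rw [stmt7psl]
  by_cases h : (stmt7cuts q r N).Nonempty
  · rw [dif_pos h]
    set c := (stmt7cuts q r N).max' h with hcdef
    obtain ⟨hc1, hc2, hc3⟩ := stmt7_cuts_spec ((stmt7cuts q r N).max'_mem h)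
    rw [← hcdef] at hc1 hc2 hc3
    have hqc : 0 < q ^ c := Nat.pow_pos (by omega : 0 < q)
    have hdm : q ^ c * (N / q ^ c) + N % q ^ c = N := Nat.div_add_mod N (q ^ c)
    have hdvd : q ^ (c + r) ∣ N - N % q ^ c := by
      have : N - N % q ^ c = q ^ c * (N / q ^ c) := by omega
      rw [this, pow_add]
      exact mul_dvd_mul_left _ (Nat.dvd_of_mod_eq_zero hc3)
    have hsum : (N - N % q ^ c) + N % q ^ c = N := by omega
    have hφeq : φ N = φ (N - N % q ^ c) + φ (N % q ^ c) := by
      conv_lhs => rw [← hsum]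
      exact hqa c _ _ (Nat.mod_lt N hqc) hdvd
    rw [hφeq, ← ih _ (by omega), ← ih _ hc2]
    rfl
  · rw [dif_neg h]
    exact hf N

/-- Any `q`-quasiadditive sequence with gap `≤ r` taking values in `ℝ/ℤ` lifts to a
`q`-quasiadditive sequence with gap `≤ r` taking values in `ℝ`. -/
theorem stmt_7 (q r : ℕ) (hq : 2 ≤ q) (φ : ℕ → AddCircle (1 : ℝ)) (hφ0 : φ 0 = 0)
    (hqa : ∀ l n m : ℕ, m < q ^ l → q ^ (l + r) ∣ n → φ (n + m) = φ n + φ m) :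
    ∃ ψ : ℕ → ℝ, ψ 0 = 0 ∧
      (∀ l n m : ℕ, m < q ^ l → q ^ (l + r) ∣ n → ψ (n + m) = ψ n + ψ m) ∧
      ∀ n, φ n = (ψ n : AddCircle (1 : ℝ)) := by
  have hsurj : ∀ n, ∃ x : ℝ, ((x : ℝ) : AddCircle (1 : ℝ)) = φ n := fun n =>
    QuotientAddGroup.mk_surjective (φ n)
  choose g hg using hsurj
  set f : ℕ → ℝ := fun n => if n = 0 then 0 else g n with hfdef
  have hf : ∀ n, ((f n : ℝ) : AddCircle (1 : ℝ)) = φ n := by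
    intro n
    by_cases hn : n = 0
    · simp [hfdef, hn, hφ0]
    · simp [hfdef, hn, hg n]
  have hcuts0 : ¬(stmt7cuts q r 0).Nonempty := by
    simp [stmt7cuts]
  have hψ0 : stmt7psl q r f 0 = 0 := by
    rw [stmt7psl, dif_neg hcuts0]
    simp [hfdef]
  refine ⟨stmt7psl q r f, hψ0, ?_, fun n => (stmt7psl_coe q r hq f φ hf hqa n).symm⟩
  intro l n m hm hn
  rcases Nat.eq_zero_or_pos m with hm0 | hm0
  · subst hm0; rw [Nat.add_zero, hψ0, add_zero]
  rcases Nat.eq_zero_or_pos n with hn0 | hn0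
  · subst hn0; rw [Nat.zero_add, hψ0, zero_add]
  obtain ⟨t, rfl⟩ := hn
  have hql : 0 < q ^ l := Nat.pow_pos (by omega : 0 < q)
  have hrw : q ^ (l + r) * t = q ^ l * (q ^ r * t) := by rw [pow_add]; ring
  have hmod : (q ^ (l + r) * t + m) % q ^ l = m := by
    rw [hrw, Nat.mul_add_mod, Nat.mod_eq_of_lt hm]
  have hdiv : (q ^ (l + r) * t + m) / q ^ l = q ^ r * t := by
    rw [hrw, Nat.mul_add_div hql, Nat.div_eq_of_lt hm, Nat.add_zero]
  have := stmt7psl_cut q r hq f (q ^ (l + r) * t + m) l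
    (by rw [hmod]; exact hm0) (by rw [hmod]; omega)
    (by rw [hdiv, Nat.mul_mod_right])
  rw [hmod] at this
  rw [this]
  congr 2
  omega
end

section
/- Suppose f : ℕ → ℂ is a bounded almost periodic sequence. Assuming that every bounded periodic sequence g : ℕ → ℂ satisfies E_{n<N} g(n)μ(n) → 0 as N → ∞ (where μ is the Möbius function), it follows that E_{n<N} f(n)μ(n) → 0 as N → ∞. -/
/-- A bounded sequence `f : ℕ → ℂ` is almost periodic if for every `ε > 0` there is a period
`Q > 0` such that for every `N` there is a `Q`-periodic sequence agreeing with `f` up to `ε`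
outside a set of at most `εN` elements of `[N]`. -/
def AlmostPeriodic (f : ℕ → ℂ) : Prop :=
  ∀ ε : ℝ, 0 < ε → ∃ Q : ℕ, 0 < Q ∧ ∀ N : ℕ, ∃ g : ℕ → ℂ, (∀ n, g (n + Q) = g n) ∧
    (((Finset.range N).filter (fun n => ¬ ‖f n - g n‖ ≤ ε)).card : ℝ) ≤ ε * N

open Finset ArithmeticFunction

/-- Assuming every bounded periodic sequence is asymptotically orthogonal to the Möbius
function, so is every bounded almost periodic sequence. -/
theorem stmt_14 (f : ℕ → ℂ) (C : ℝ) (hfb : ∀ n, ‖f n‖ ≤ C)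
    (hf : AlmostPeriodic f)
    (hperiodic : ∀ g : ℕ → ℂ, (∃ D : ℝ, ∀ n, ‖g n‖ ≤ D) →
      (∃ Q : ℕ, 0 < Q ∧ ∀ n, g (n + Q) = g n) →
      Filter.Tendsto
        (fun N : ℕ => (∑ n ∈ Finset.range N, g n * (ArithmeticFunction.moebius n : ℂ)) / N)
        Filter.atTop (nhds 0)) :
    Filter.Tendsto
      (fun N : ℕ => (∑ n ∈ Finset.range N, f n * (ArithmeticFunction.moebius n : ℂ)) / N)
      Filter.atTop (nhds 0) := by
  have hC : (0:ℝ) ≤ C := le_trans (norm_nonneg _) (hfb 0)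
  have hμ : ∀ n : ℕ, ‖((moebius n : ℤ) : ℂ)‖ ≤ 1 := by
    intro n
    rw [Complex.norm_intCast]
    exact_mod_cast ArithmeticFunction.abs_moebius_le_one
  rw [Metric.tendsto_atTop]
  intro ε hε
  set δ : ℝ := min 1 (ε / (6 * (C + 1))) with hδdef
  have hδpos : 0 < δ := lt_min one_pos (by positivity)
  have hδ1 : δ ≤ 1 := min_le_left _ _
  have hδε : 3 * (C + 1) * δ < ε := by
    have h2 : δ ≤ ε / (6 * (C + 1)) := min_le_right _ _
    have h3 : ε / (6 * (C + 1)) * (6 * (C+1)) = ε := by field_simp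
    nlinarith
  obtain ⟨Q, hQ, hg⟩ := hf δ hδpos
  -- indicator sequences tend to 0 against μ
  have hind : ∀ r : ℕ, Filter.Tendsto (fun N : ℕ =>
      (∑ n ∈ range N, (if n % Q = r then (1:ℂ) else 0) * (moebius n : ℂ)) / N)
      Filter.atTop (nhds 0) := by
    intro r
    apply hperiodic
    · exact ⟨1, fun n => by split <;> simp⟩
    · exact ⟨Q, hQ, fun n => by simp [Nat.add_mod_right]⟩
  have hsum : Filter.Tendsto (fun N : ℕ => ∑ r ∈ range Q,
      ‖(∑ n ∈ range N, (if n % Q = r then (1:ℂ) else 0) * (moebius n : ℂ)) / N‖)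
      Filter.atTop (nhds 0) := by
    have h0 : (0:ℝ) = ∑ r ∈ range Q, (0:ℝ) := by simp
    rw [h0]
    exact tendsto_finset_sum _ (fun r _ => by simpa using (hind r).norm)
  have hev := (hsum.eventually_lt_const hδpos).and (Filter.eventually_ge_atTop 1)
  rw [Filter.eventually_atTop] at hev
  obtain ⟨N₀, hN₀⟩ := hev
  refine ⟨N₀, fun N hN => ?_⟩
  obtain ⟨hNsum, hN1⟩ := hN₀ N hN
  obtain ⟨g, hgper, hgcard⟩ := hg N
  -- truncation
  set g' : ℕ → ℂ := fun n => if ‖g n‖ ≤ C + δ then g n else 0 with hg'def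
  have hg'per : Function.Periodic g' Q := fun n => by simp only [hg'def, hgper n]
  have hg'bd : ∀ n, ‖g' n‖ ≤ C + δ := by
    intro n
    simp only [hg'def]
    split
    · assumption
    · simp; positivity
  have hg'close : ∀ n, ‖f n - g n‖ ≤ δ → g' n = g n := by
    intro n h
    have : ‖g n‖ ≤ C + δ := by
      have := norm_sub_le (g n) (f n) -- maybe wrong name
      calc ‖g n‖ = ‖f n - (f n - g n)‖ := by ring_nf
      _ ≤ ‖f n‖ + ‖f n - g n‖ := by
          simpa using norm_sub_le (f n) (f n - g n)
      _ ≤ C + δ := add_le_add (hfb n) h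
    simp only [hg'def, if_pos this]
  have hNpos : (0:ℝ) < N := by exact_mod_cast hN1
  -- first sum bound
  have h1 : ‖∑ n ∈ range N, (f n - g' n) * (moebius n : ℂ)‖ ≤ δ * N * (2*C + δ + 1) := by
    calc ‖∑ n ∈ range N, (f n - g' n) * (moebius n : ℂ)‖
        ≤ ∑ n ∈ range N, ‖(f n - g' n) * (moebius n : ℂ)‖ := norm_sum_le _ _
      _ ≤ ∑ n ∈ range N, ‖f n - g' n‖ := by
          refine sum_le_sum fun n _ => ?_
          rw [norm_mul]
          exact mul_le_of_le_one_right (norm_nonneg _) (hμ n)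
      _ = (∑ n ∈ (range N).filter (fun n => ¬ ‖f n - g n‖ ≤ δ), ‖f n - g' n‖)
          + ∑ n ∈ (range N).filter (fun n => ¬ ¬ ‖f n - g n‖ ≤ δ), ‖f n - g' n‖ :=
          (sum_filter_add_sum_filter_not _ _ _).symm
      _ ≤ δ * N * (2*C + δ) + N * δ := by
          refine add_le_add ?_ ?_
          · calc (∑ n ∈ (range N).filter (fun n => ¬ ‖f n - g n‖ ≤ δ), ‖f n - g' n‖)
                ≤ ((range N).filter (fun n => ¬ ‖f n - g n‖ ≤ δ)).card • (2*C + δ) := by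
                  refine sum_le_card_nsmul _ _ _ fun n _ => ?_
                  calc ‖f n - g' n‖ ≤ ‖f n‖ + ‖g' n‖ := norm_sub_le _ _
                  _ ≤ C + (C + δ) := add_le_add (hfb n) (hg'bd n)
                  _ = 2*C + δ := by ring
              _ ≤ δ * N * (2*C + δ) := by
                  rw [nsmul_eq_mul]
                  exact mul_le_mul_of_nonneg_right hgcard (by positivity)
          · calc (∑ n ∈ (range N).filter (fun n => ¬ ¬ ‖f n - g n‖ ≤ δ), ‖f n - g' n‖)
                ≤ ((range N).filter (fun n => ¬ ¬ ‖f n - g n‖ ≤ δ)).card • δ := by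
                  refine sum_le_card_nsmul _ _ _ fun n hn => ?_
                  simp only [mem_filter, not_not] at hn
                  rw [hg'close n hn.2]
                  exact hn.2
              _ ≤ N * δ := by
                  rw [nsmul_eq_mul]
                  refine mul_le_mul_of_nonneg_right ?_ hδpos.le
                  have := (card_filter_le (range N) (fun n => ¬ ¬ ‖f n - g n‖ ≤ δ)).trans (le_of_eq (card_range N))
                  exact_mod_cast this
      _ = δ * N * (2*C + δ + 1) := by ring
  -- second sum bound
  have h2 : ‖∑ n ∈ range N, g' n * (moebius n : ℂ)‖ ≤ (C + δ) * ∑ r ∈ range Q,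
      ‖∑ n ∈ range N, (if n % Q = r then (1:ℂ) else 0) * (moebius n : ℂ)‖ := by
    have hfib : ∑ r ∈ range Q, ∑ n ∈ (range N).filter (fun n => n % Q = r),
        g' n * (moebius n : ℂ) = ∑ n ∈ range N, g' n * (moebius n : ℂ) :=
      sum_fiberwise_of_maps_to (fun n _ => mem_range.2 (Nat.mod_lt n hQ)) _
    rw [← hfib]
    calc ‖∑ r ∈ range Q, ∑ n ∈ (range N).filter (fun n => n % Q = r), g' n * (moebius n : ℂ)‖
        ≤ ∑ r ∈ range Q, ‖∑ n ∈ (range N).filter (fun n => n % Q = r),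
            g' n * (moebius n : ℂ)‖ := norm_sum_le _ _
      _ ≤ ∑ r ∈ range Q, (C + δ) *
            ‖∑ n ∈ range N, (if n % Q = r then (1:ℂ) else 0) * (moebius n : ℂ)‖ := by
          refine sum_le_sum fun r _ => ?_
          have hrw : ∑ n ∈ (range N).filter (fun n => n % Q = r), g' n * (moebius n : ℂ)
              = g' r * ∑ n ∈ range N, (if n % Q = r then (1:ℂ) else 0) * (moebius n : ℂ) := by
            rw [mul_sum, sum_filter]
            refine sum_congr rfl fun n _ => ?_
            by_cases h : n % Q = r
            · rw [if_pos h, if_pos h, one_mul]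
              congr 1
              rw [← h]
              exact (hg'per.map_mod_nat n).symm
            · rw [if_neg h, if_neg h, zero_mul, mul_zero]
          rw [hrw, norm_mul]
          exact mul_le_mul_of_nonneg_right (hg'bd r) (norm_nonneg _)
      _ = (C + δ) * ∑ r ∈ range Q,
            ‖∑ n ∈ range N, (if n % Q = r then (1:ℂ) else 0) * (moebius n : ℂ)‖ :=
          (mul_sum _ _ _).symm
  -- combine
  have hsplit : ∑ n ∈ range N, f n * (moebius n : ℂ)
      = (∑ n ∈ range N, (f n - g' n) * (moebius n : ℂ))
        + ∑ n ∈ range N, g' n * (moebius n : ℂ) := by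
    rw [← sum_add_distrib]
    exact sum_congr rfl fun n _ => by ring
  have hNsum' : ∑ r ∈ range Q,
      ‖∑ n ∈ range N, (if n % Q = r then (1:ℂ) else 0) * (moebius n : ℂ)‖ < δ * N := by
    simp only [norm_div, Complex.norm_natCast] at hNsum
    rw [← sum_div, div_lt_iff₀ hNpos] at hNsum
    linarith
  rw [dist_zero_right, norm_div, Complex.norm_natCast, div_lt_iff₀ hNpos]
  calc ‖∑ n ∈ range N, f n * (moebius n : ℂ)‖
      ≤ ‖∑ n ∈ range N, (f n - g' n) * (moebius n : ℂ)‖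
        + ‖∑ n ∈ range N, g' n * (moebius n : ℂ)‖ := by
        rw [hsplit]; exact norm_add_le _ _
    _ ≤ δ * N * (2*C + δ + 1) + (C + δ) * (δ * N) :=
        add_le_add h1 (h2.trans (mul_le_mul_of_nonneg_left hNsum'.le (by positivity)))
    _ ≤ 3 * (C + 1) * δ * N := by
        nlinarith [mul_nonneg (mul_nonneg hδpos.le hNpos.le) (sub_nonneg.2 hδ1)]
    _ < ε * N := by
        calc 3 * (C + 1) * δ * N < ε * N := mul_lt_mul_of_pos_right hδε hNpos
end

section
/- Let q ≥ 2 and let u be a finite word over the alphabet {0,…,q−1} containing at least one nonzero letter, of length |u| = s. For α ∈ ℝ, define φ(n) = α·freq_q^u(n), where freq_q^u(n) counts the occurrences of u in the base-q expansion of n (padded with infinitely many leading zeros if u has leading zeros). Then φ is q-semiadditive with gap s − 1: φ(0) = 0 and φ(n+m+k) = φ(n+m) − φ(m) + φ(m+k) whenever k < q^l, q^l ∣ m, m < q^{l+s−1}, q^{l+s−1} ∣ n for some l ≥ 0. -/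
/-- `freqCount q u n` is the number of occurrences of the word `u` in the base-`q` expansion
of `n` (padded with infinitely many leading zeros): the number of indices `i ≥ 0` such that
the digits of `n` at positions `i, i+1, …, i+|u|−1` match `u`.  Since `u` contains a nonzero
letter, any occurrence satisfies `i < n`, so the count below is exact. -/
def freqCount (q : ℕ) (u : List ℕ) (n : ℕ) : ℕ :=
  ((Finset.range n).filter (fun i => ∀ j < u.length, n / q ^ (i + j) % q = u.getD j 0)).card

private lemma div_add_of_lt' {a b c : ℕ} (h : a % c + b < c) : (a + b) / c = a / c := by
  have hc : 0 < c := lt_of_le_of_lt (Nat.zero_le _) h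
  conv_lhs => rw [← Nat.div_add_mod a c, Nat.add_assoc]
  rw [Nat.mul_add_div hc, Nat.div_eq_of_lt h, Nat.add_zero]

private lemma digit_add_of_dvd' {q i : ℕ} (hq : 0 < q) {n m : ℕ} (h : q ^ (i + 1) ∣ n) :
    (n + m) / q ^ i % q = m / q ^ i % q := by
  obtain ⟨t, ht⟩ := h
  have hrw : n + m = m + (q * t) * q ^ i := by rw [ht]; ring
  rw [hrw, Nat.add_mul_div_right _ _ (pow_pos hq i), Nat.mul_comm q t,
    Nat.add_mul_mod_self_right]

/-- For a word `u` of length `s` over `{0, …, q−1}` containing a nonzero letter and `α ∈ ℝ`,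
the sequence `φ(n) = α · freq_q^u(n)` is `q`-semiadditive with gap `s − 1`. -/
theorem stmt_16 (q : ℕ) (hq : 2 ≤ q) (u : List ℕ) (hdig : ∀ d ∈ u, d < q)
    (hnz : ∃ d ∈ u, d ≠ 0) (α : ℝ) :
    (α * freqCount q u 0 = 0) ∧
    ∀ l n m k : ℕ, k < q ^ l → q ^ l ∣ m → m < q ^ (l + (u.length - 1)) →
      q ^ (l + (u.length - 1)) ∣ n →
      α * freqCount q u (n + m + k) =
        α * freqCount q u (n + m) - α * freqCount q u m + α * freqCount q u (m + k) := by
  have hq0 : 0 < q := by omega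
  obtain ⟨d, hdmem, hd0⟩ := hnz
  obtain ⟨j0, hj0, hj0e⟩ := List.mem_iff_getElem.mp hdmem
  have hs : 1 ≤ u.length := List.length_pos_iff.mpr (List.ne_nil_of_mem hdmem)
  -- any occurrence index is < x
  have hbound : ∀ x i, (∀ j < u.length, x / q ^ (i + j) % q = u.getD j 0) → i < x := by
    intro x i hP
    have h1 := hP j0 hj0
    rw [List.getD_eq_getElem u 0 hj0, hj0e] at h1
    have h2 : x / q ^ (i + j0) ≠ 0 := by
      intro h; rw [h] at h1; simp at h1; exact hd0 h1.symm
    have h3 : q ^ (i + j0) ≤ x := by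
      by_contra h; push_neg at h; exact h2 (Nat.div_eq_of_lt h)
    have h4 : i + j0 < q ^ (i + j0) := Nat.lt_pow_self hq
    omega
  have hext : ∀ x B, x ≤ B →
      freqCount q u x = ((Finset.range B).filter
        (fun i => ∀ j < u.length, x / q ^ (i + j) % q = u.getD j 0)).card := by
    intro x B hB
    unfold freqCount
    congr 1
    apply Finset.ext
    intro i
    simp only [Finset.mem_filter, Finset.mem_range]
    exact ⟨fun ⟨h1, h2⟩ => ⟨lt_of_lt_of_le h1 hB, h2⟩,
           fun ⟨h1, h2⟩ => ⟨hbound x i h2, h2⟩⟩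
  have hPcong : ∀ x y i, (∀ j < u.length, x / q ^ (i + j) % q = y / q ^ (i + j) % q) →
      ((∀ j < u.length, x / q ^ (i + j) % q = u.getD j 0) ↔
       (∀ j < u.length, y / q ^ (i + j) % q = u.getD j 0)) := by
    intro x y i h
    constructor <;> intro hp j hj
    · rw [← h j hj]; exact hp j hj
    · rw [h j hj]; exact hp j hj
  refine ⟨by simp [freqCount], ?_⟩
  intro l n m k hk hm hmlt hn
  set L := l + (u.length - 1) with hLdef
  have hL : l ≤ L := Nat.le_add_right _ _
  -- key digit lemmas
  have hkey1 : ∀ i, l ≤ i → (m + k) / q ^ i = m / q ^ i := by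
    intro i hi
    apply div_add_of_lt'
    have hdl : q ^ l ∣ m % q ^ i := (Nat.dvd_mod_iff (pow_dvd_pow q hi)).mpr hm
    have h1 : m % q ^ i < q ^ i := Nat.mod_lt _ (pow_pos hq0 i)
    have h3 : q ^ l ≤ q ^ i - m % q ^ i :=
      Nat.le_of_dvd (by omega) (Nat.dvd_sub (pow_dvd_pow q hi) hdl)
    omega
  have hmk : m + k < q ^ L := by
    have h2 : q ^ l ∣ q ^ L - m := Nat.dvd_sub (pow_dvd_pow q hL) hm
    have h3 : q ^ l ≤ q ^ L - m := Nat.le_of_dvd (by omega) h2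
    omega
  have hkey4 : ∀ w, w < q ^ L → ∀ i, L ≤ i → (n + w) / q ^ i = n / q ^ i := by
    intro w hw i hi
    apply div_add_of_lt'
    have hdl : q ^ L ∣ n % q ^ i := (Nat.dvd_mod_iff (pow_dvd_pow q hi)).mpr hn
    have h1 : n % q ^ i < q ^ i := Nat.mod_lt _ (pow_pos hq0 i)
    have h3 : q ^ L ≤ q ^ i - n % q ^ i :=
      Nat.le_of_dvd (by omega) (Nat.dvd_sub (pow_dvd_pow q hi) hdl)
    omega
  have hkey2 : ∀ w i, i < L → (n + w) / q ^ i % q = w / q ^ i % q := by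
    intro w i hi
    exact digit_add_of_dvd' hq0 (dvd_trans (pow_dvd_pow q (by omega)) hn)
  set B := n + m + k + 1 with hBdef
  -- the four pointwise equivalences
  have hcard :
      ((Finset.range B).filter
        (fun i => ∀ j < u.length, (n + m + k) / q ^ (i + j) % q = u.getD j 0)).card
      + ((Finset.range B).filter
        (fun i => ∀ j < u.length, m / q ^ (i + j) % q = u.getD j 0)).card
      = ((Finset.range B).filter
        (fun i => ∀ j < u.length, (n + m) / q ^ (i + j) % q = u.getD j 0)).card
      + ((Finset.range B).filter
        (fun i => ∀ j < u.length, (m + k) / q ^ (i + j) % q = u.getD j 0)).card := by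
    classical
    simp only [Finset.card_filter]
    rw [← Finset.sum_add_distrib, ← Finset.sum_add_distrib]
    apply Finset.sum_congr rfl
    intro i _
    rcases lt_or_ge i l with hi | hi
    · -- i < l : N ↔ m+k, n+m ↔ m
      have e1 : (∀ j < u.length, (n + m + k) / q ^ (i + j) % q = u.getD j 0) ↔
          (∀ j < u.length, (m + k) / q ^ (i + j) % q = u.getD j 0) := by
        apply hPcong
        intro j hj
        rw [show n + m + k = n + (m + k) from by omega]
        exact hkey2 (m + k) (i + j) (by omega)
      have e2 : (∀ j < u.length, (n + m) / q ^ (i + j) % q = u.getD j 0) ↔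
          (∀ j < u.length, m / q ^ (i + j) % q = u.getD j 0) := by
        apply hPcong
        intro j hj
        exact hkey2 m (i + j) (by omega)
      rw [if_congr e1 rfl rfl, if_congr e2 rfl rfl, Nat.add_comm]
    · -- i ≥ l : N ↔ n+m, m+k ↔ m
      have e1 : (∀ j < u.length, (n + m + k) / q ^ (i + j) % q = u.getD j 0) ↔
          (∀ j < u.length, (n + m) / q ^ (i + j) % q = u.getD j 0) := by
        apply hPcong
        intro j hj
        rcases lt_or_ge (i + j) L with hij | hij
        · rw [show n + m + k = n + (m + k) from by omega,
            hkey2 (m + k) (i + j) hij, hkey2 m (i + j) hij,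
            hkey1 (i + j) (by omega)]
        · rw [show n + m + k = n + (m + k) from by omega,
            hkey4 (m + k) hmk (i + j) hij, hkey4 m (by omega) (i + j) hij]
      have e2 : (∀ j < u.length, (m + k) / q ^ (i + j) % q = u.getD j 0) ↔
          (∀ j < u.length, m / q ^ (i + j) % q = u.getD j 0) := by
        apply hPcong
        intro j hj
        rw [hkey1 (i + j) (by omega)]
      rw [if_congr e1 rfl rfl, if_congr e2 rfl rfl]
  rw [hext (n + m + k) B (by omega), hext (n + m) B (by omega),
    hext m B (by omega), hext (m + k) B (by omega)]
  have hR : ((((Finset.range B).filter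
        (fun i => ∀ j < u.length, (n + m + k) / q ^ (i + j) % q = u.getD j 0)).card : ℝ)
      + (((Finset.range B).filter
        (fun i => ∀ j < u.length, m / q ^ (i + j) % q = u.getD j 0)).card : ℝ))
      = ((((Finset.range B).filter
        (fun i => ∀ j < u.length, (n + m) / q ^ (i + j) % q = u.getD j 0)).card : ℝ)
      + (((Finset.range B).filter
        (fun i => ∀ j < u.length, (m + k) / q ^ (i + j) % q = u.getD j 0)).card : ℝ)) := by
    exact_mod_cast hcard
  linear_combination α * hR
end

section
/- Let q ≥ 2, r ≥ 0, and f : ℕ → 𝕌 be q-quasimultiplicative with gap ≤ r. If f is q-almost periodic, then there exists k ≥ 0 such that limsup_{N→∞} |E_{n<N} f(n·q^k)| > 0. -/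
/-- A bounded sequence `f : ℕ → ℂ` is `q`-almost periodic if for every `ε > 0` there is `L`
such that for every `N` there is a `q^L`-periodic sequence agreeing with `f` up to `ε`
outside a set of at most `εN` elements of `[N]`. -/
def QAlmostPeriodic (q : ℕ) (f : ℕ → ℂ) : Prop :=
  ∀ ε : ℝ, 0 < ε → ∃ L : ℕ, ∀ N : ℕ, ∃ g : ℕ → ℂ, (∀ n, g (n + q ^ L) = g n) ∧
    (((Finset.range N).filter (fun n => ¬ ‖f n - g n‖ ≤ ε)).card : ℝ) ≤ ε * N

/-- If a unimodular `q`-quasimultiplicative sequence with gap `≤ r` is `q`-almost periodic,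
then some dilation `n ↦ f(n q^k)` has Cesàro averages not converging to `0`. -/
theorem stmt_17 (q r : ℕ) (hq : 2 ≤ q) (f : ℕ → ℂ)
    (huni : ∀ n, ‖f n‖ = 1) (hf0 : f 0 = 1)
    (hqm : ∀ l n m : ℕ, m < q ^ l → q ^ (l + r) ∣ n → f (n + m) = f n * f m)
    (hap : QAlmostPeriodic q f) :
    ∃ k : ℕ, 0 < Filter.limsup
      (fun N : ℕ => ‖(∑ n ∈ Finset.range N, f (n * q ^ k)) / (N : ℂ)‖)
      Filter.atTop := by
  classical
  have hq1 : 1 ≤ q := le_trans (by norm_num) hq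
  set ε : ℝ := (8 * (q : ℝ) ^ r)⁻¹ with hεdef
  have hqrR : (1 : ℝ) ≤ (q : ℝ) ^ r := one_le_pow₀ (by exact_mod_cast hq1)
  have hε0 : 0 < ε := by positivity
  have hεq : ε * (q : ℝ) ^ r = 1 / 8 := by
    have h8 : ε * (8 * (q : ℝ) ^ r) = 1 := inv_mul_cancel₀ (by positivity)
    nlinarith [h8]
  have hε8 : ε ≤ 1 / 8 := by nlinarith [mul_le_mul_of_nonneg_left hqrR hε0.le]
  have hε1 : ε ≤ 1 := by linarith
  obtain ⟨L, hL⟩ := hap ε hε0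
  refine ⟨L + r, ?_⟩
  set Q : ℕ := q ^ L with hQ
  set Q' : ℕ := q ^ (L + r) with hQ'
  have hQ0 : 0 < Q := Nat.pow_pos (by omega)
  have hQQ' : Q ≤ Q' := by rw [hQ, hQ']; exact Nat.pow_le_pow_right hq1 (by omega)
  have hQ'0 : 0 < Q' := lt_of_lt_of_le hQ0 hQQ'
  -- main estimate: for all T ≥ 1, |∑_{t<T} f(t q^(L+r)) / T| ≥ 1/4
  have key : ∀ T : ℕ, 1 ≤ T →
      (1 / 4 : ℝ) ≤ ‖(∑ n ∈ Finset.range T, f (n * Q')) / (T : ℂ)‖ := by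
    intro T hT
    set N : ℕ := T * Q' with hN
    obtain ⟨g, hgper, hgcard⟩ := hL N
    set B : Finset ℕ := (Finset.range N).filter (fun n => ¬ ‖f n - g n‖ ≤ ε) with hB
    set g' : ℕ → ℂ := fun n => if ‖g n‖ ≤ 2 then g n else 0 with hg'
    have hg'bound : ∀ n, ‖g' n‖ ≤ 2 := by
      intro n
      by_cases h : ‖g n‖ ≤ 2
      · simpa [hg', h] using h
      · simp [hg', h]
    have hgperQ : ∀ n, g (n + Q) = g n := by rw [hQ]; exact hgper
    have hg'per : ∀ n, g' (n + Q) = g' n := by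
      intro n
      simp only [hg', hgperQ n]
    have hg'perC : ∀ c n : ℕ, g' (c * Q + n) = g' n := by
      intro c
      induction c with
      | zero => simp
      | succ d ih =>
        intro n
        have he : (d + 1) * Q + n = (d * Q + n) + Q := by ring
        rw [he, hg'per, ih]
    -- membership in range N
    have hmemN : ∀ t ∈ Finset.range T, ∀ m ∈ Finset.range Q, t * Q' + m < N := by
      intro t ht m hm
      rw [Finset.mem_range] at ht hm
      calc t * Q' + m < t * Q' + Q' := by omega
        _ = (t + 1) * Q' := by ring
        _ ≤ T * Q' := Nat.mul_le_mul_right _ (by omega)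
    -- good points
    have hgood : ∀ n, n < N → n ∉ B → ‖f n - g n‖ ≤ ε := by
      intro n hn hnB
      by_contra h
      exact hnB (Finset.mem_filter.mpr ⟨Finset.mem_range.mpr hn, h⟩)
    have hg'eq : ∀ n, ‖f n - g n‖ ≤ ε → g' n = g n := by
      intro n h
      have h2 : ‖g n‖ ≤ 2 := by
        have h1 : g n = f n - (f n - g n) := by ring
        calc ‖g n‖ = ‖f n - (f n - g n)‖ := by rw [← h1]
          _ ≤ ‖f n‖ + ‖f n - g n‖ := norm_sub_le _ _
          _ ≤ 1 + 1 := by rw [huni]; linarith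
          _ = 2 := by norm_num
      simp [hg', h2]
    -- the sums
    set A : ℂ := ∑ t ∈ Finset.range T, f (t * Q') with hA
    set C : ℂ := ∑ m ∈ Finset.range Q, f m * (starRingEnd ℂ) (g' m) with hC
    set D : ℂ := ∑ t ∈ Finset.range T, ∑ m ∈ Finset.range Q,
        f (t * Q' + m) * (starRingEnd ℂ) (g' m) with hD
    have hfactor : D = A * C := by
      rw [hD, hA, hC, Finset.sum_mul_sum]
      apply Finset.sum_congr rfl
      intro t _
      apply Finset.sum_congr rfl
      intro m hm
      rw [Finset.mem_range] at hm
      have hmul := hqm L (t * Q') m (by rw [← hQ]; exact hm) ⟨t, by rw [hQ']; ring⟩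
      rw [hmul, mul_assoc]
    -- per-term lower bound on the real part
    have hterm : ∀ t ∈ Finset.range T, ∀ m ∈ Finset.range Q,
        (1 - ε) - (if (t * Q' + m) ∈ B then (3 : ℝ) else 0) ≤
          (f (t * Q' + m) * (starRingEnd ℂ) (g' m)).re := by
      intro t ht m hm
      set n : ℕ := t * Q' + m with hn
      have hnlt : n < N := hmemN t ht m hm
      by_cases hnB : n ∈ B
      · rw [if_pos hnB]
        have h1 : ‖f n * (starRingEnd ℂ) (g' m)‖ ≤ 2 := by
          rw [norm_mul, huni, one_mul, Complex.norm_conj]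
          exact hg'bound m
        have h2 : -‖f n * (starRingEnd ℂ) (g' m)‖ ≤
            (f n * (starRingEnd ℂ) (g' m)).re :=
          neg_le_of_abs_le (Complex.abs_re_le_norm _)
        linarith
      · rw [if_neg hnB]
        have hgn : ‖f n - g n‖ ≤ ε := hgood n hnlt hnB
        have hg'm : g' m = g n := by
          have h1 : g' n = g' m := by
            have he : n = (t * q ^ r) * Q + m := by rw [hn, hQ', hQ, pow_add]; ring
            rw [he, hg'perC]
          rw [← h1]
          exact hg'eq n hgn
        rw [hg'm]
        have hmc : f n * (starRingEnd ℂ) (g n) =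
            1 + f n * ((starRingEnd ℂ) (g n) - (starRingEnd ℂ) (f n)) := by
          have h2 : f n * (starRingEnd ℂ) (f n) = 1 := by
            rw [Complex.mul_conj, Complex.normSq_eq_norm_sq, huni]
            norm_num
          linear_combination h2
        rw [hmc, Complex.add_re, Complex.one_re]
        have habs : ‖f n * ((starRingEnd ℂ) (g n) - (starRingEnd ℂ) (f n))‖ ≤ ε := by
          rw [norm_mul, huni, one_mul, ← map_sub (starRingEnd ℂ), Complex.norm_conj,
            norm_sub_rev]
          exact hgn
        have h3 : -‖f n * ((starRingEnd ℂ) (g n) - (starRingEnd ℂ) (f n))‖ ≤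
            (f n * ((starRingEnd ℂ) (g n) - (starRingEnd ℂ) (f n))).re :=
          neg_le_of_abs_le (Complex.abs_re_le_norm _)
        linarith
    -- bound on the bad-point contribution
    have hbadsum : ∑ t ∈ Finset.range T, ∑ m ∈ Finset.range Q,
        (if (t * Q' + m) ∈ B then (3 : ℝ) else 0) ≤ 3 * (ε * N) := by
      have hinj : ∀ p ∈ Finset.range T ×ˢ Finset.range Q,
          ∀ p' ∈ Finset.range T ×ˢ Finset.range Q,
          p.1 * Q' + p.2 = p'.1 * Q' + p'.2 → p = p' := by
        intro p hp p' hp' he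
        rw [Finset.mem_product, Finset.mem_range, Finset.mem_range] at hp hp'
        have h2 : p.2 < Q' := lt_of_lt_of_le hp.2 hQQ'
        have h2' : p'.2 < Q' := lt_of_lt_of_le hp'.2 hQQ'
        have hdiv : ∀ a b : ℕ, b < Q' → (a * Q' + b) / Q' = a := by
          intro a b hb
          rw [add_comm, mul_comm, Nat.add_mul_div_left _ _ hQ'0, Nat.div_eq_of_lt hb, zero_add]
        have h1 : p.1 = p'.1 := by
          rw [← hdiv p.1 p.2 h2, ← hdiv p'.1 p'.2 h2', he]
        have h2'' : p.2 = p'.2 := by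
          rw [h1] at he
          omega
        exact Prod.ext h1 h2''
      have hstep : ∑ t ∈ Finset.range T, ∑ m ∈ Finset.range Q,
          (if (t * Q' + m) ∈ B then (3 : ℝ) else 0)
          = ∑ n ∈ (Finset.range T ×ˢ Finset.range Q).image (fun p => p.1 * Q' + p.2),
            (if n ∈ B then (3 : ℝ) else 0) := by
        rw [Finset.sum_image hinj, ← Finset.sum_product']
      rw [hstep]
      have hsub : (Finset.range T ×ˢ Finset.range Q).image (fun p => p.1 * Q' + p.2)
          ⊆ Finset.range N := by
        intro n hn
        rw [Finset.mem_image] at hn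
        obtain ⟨p, hp, hpe⟩ := hn
        rw [Finset.mem_product] at hp
        rw [Finset.mem_range, ← hpe]
        exact hmemN p.1 hp.1 p.2 hp.2
      calc ∑ n ∈ (Finset.range T ×ˢ Finset.range Q).image (fun p => p.1 * Q' + p.2),
            (if n ∈ B then (3 : ℝ) else 0)
          ≤ ∑ n ∈ Finset.range N, (if n ∈ B then (3 : ℝ) else 0) := by
            apply Finset.sum_le_sum_of_subset_of_nonneg hsub
            intro n _ _
            split <;> norm_num
        _ = ∑ n ∈ Finset.range N ∩ B, (3 : ℝ) := Finset.sum_ite_mem _ _ _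
        _ = 3 * ((Finset.range N ∩ B).card : ℝ) := by
            rw [Finset.sum_const, nsmul_eq_mul]; ring
        _ ≤ 3 * (B.card : ℝ) := by
            have hc : (Finset.range N ∩ B).card ≤ B.card :=
              Finset.card_le_card Finset.inter_subset_right
            have hc' : ((Finset.range N ∩ B).card : ℝ) ≤ (B.card : ℝ) := by exact_mod_cast hc
            linarith
        _ ≤ 3 * (ε * N) := by linarith [hgcard]
    -- lower bound on D.re
    have hDre : ((T : ℝ) * Q) / 2 ≤ D.re := by
      have h1 : D.re = ∑ t ∈ Finset.range T, ∑ m ∈ Finset.range Q,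
          (f (t * Q' + m) * (starRingEnd ℂ) (g' m)).re := by
        rw [hD, Complex.re_sum]
        exact Finset.sum_congr rfl fun t _ => Complex.re_sum _ _
      have h2 : ∑ t ∈ Finset.range T, ∑ m ∈ Finset.range Q,
          ((1 - ε) - (if (t * Q' + m) ∈ B then (3 : ℝ) else 0)) ≤ D.re := by
        rw [h1]
        exact Finset.sum_le_sum fun t ht => Finset.sum_le_sum fun m hm => hterm t ht m hm
      have h3 : ∑ t ∈ Finset.range T, ∑ m ∈ Finset.range Q,
          ((1 - ε) - (if (t * Q' + m) ∈ B then (3 : ℝ) else 0))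
          = (T : ℝ) * Q * (1 - ε) - ∑ t ∈ Finset.range T, ∑ m ∈ Finset.range Q,
            (if (t * Q' + m) ∈ B then (3 : ℝ) else 0) := by
        simp only [Finset.sum_sub_distrib, Finset.sum_const, Finset.card_range, nsmul_eq_mul]
        ring
      have hNr : (N : ℝ) = (T : ℝ) * Q * (q : ℝ) ^ r := by
        rw [hN, hQ', hQ, pow_add]
        push_cast
        ring
      have hx : (0 : ℝ) ≤ (T : ℝ) * Q := by positivity
      have h4 : (T : ℝ) * Q * (1 - ε) - 3 * (ε * N) ≤ D.re := by
        rw [h3] at h2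
        linarith [hbadsum]
      rw [hNr] at h4
      nlinarith [mul_nonneg hx hε0.le, mul_nonneg (mul_nonneg hx hε0.le)
        (sub_nonneg.mpr hqrR)]
    -- bound |C| and conclude |A| ≥ T/4
    have hCb : ‖C‖ ≤ 2 * Q := by
      rw [hC]
      refine le_trans (norm_sum_le _ _) ?_
      calc ∑ m ∈ Finset.range Q, ‖f m * (starRingEnd ℂ) (g' m)‖
          ≤ ∑ m ∈ Finset.range Q, 2 := by
            refine Finset.sum_le_sum fun m _ => ?_
            rw [norm_mul, huni, one_mul, Complex.norm_conj]
            exact hg'bound m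
        _ = 2 * Q := by
            rw [Finset.sum_const, Finset.card_range, nsmul_eq_mul]; ring
    have hDabs : D.re ≤ ‖A‖ * ‖C‖ :=
      le_trans (Complex.re_le_norm D) (by rw [hfactor, norm_mul])
    have hQR : (0 : ℝ) < Q := by exact_mod_cast hQ0
    have hAC : ‖A‖ * ‖C‖ ≤ ‖A‖ * (2 * Q) :=
      mul_le_mul_of_nonneg_left hCb (norm_nonneg A)
    have hAlb : (T : ℝ) / 4 ≤ ‖A‖ := by
      nlinarith [hDre, hDabs, hAC, norm_nonneg A, hQR]
    rw [norm_div, Complex.norm_natCast]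
    have hT0 : (0 : ℝ) < T := by exact_mod_cast hT
    rw [le_div_iff₀ hT0]
    rw [hA] at hAlb
    linarith
  -- conclude about the limsup
  have hub : ∀ N : ℕ, ‖(∑ n ∈ Finset.range N, f (n * Q')) / (N : ℂ)‖ ≤ 1 := by
    intro N
    rcases Nat.eq_zero_or_pos N with h0 | hpos
    · subst h0; simp
    · rw [norm_div, Complex.norm_natCast, div_le_one (by exact_mod_cast hpos)]
      calc ‖∑ n ∈ Finset.range N, f (n * Q')‖
          ≤ ∑ n ∈ Finset.range N, ‖f (n * Q')‖ := norm_sum_le _ _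
        _ = N := by simp [huni]
  refine lt_of_lt_of_le (by norm_num : (0 : ℝ) < 1 / 4) ?_
  exact Filter.le_limsup_of_frequently_le
    ((Filter.eventually_atTop.mpr ⟨1, key⟩).frequently)
    (Filter.isBoundedUnder_of ⟨1, hub⟩)
end
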